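/- arXiv:math/0605781 — 3 statements merged into one kernel-verified Lean document; each statement's English description precedes it below -/
import Mathlib

section
/- Let 1 ≤ p < ∞ and let ℓ_p^2 denote the real space ℝ² with the p-norm. Then (1/2)·M_p ≤ n(ℓ_p^2) ≤ M_p, where M_p = sup_{t∈[0,1]} |t^{p-1} − t|/(1 + t^p). -/
open MeasureTheory NormedSpace Metric Filter
open scoped ENNReal NNReal Topology

/-- The numerical radius of a bounded linear operator `T` on a normed space `X`:
`v(T) = sup {‖x*(Tx)‖ : ‖x‖ = ‖x*‖ = x*(x) = 1}`. -/
noncomputable def numRadius (𝕜 : Type*) [RCLike 𝕜] (X : Type*) [NormedAddCommGroup X]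
    [NormedSpace 𝕜 X] (T : X →L[𝕜] X) : ℝ :=
  sSup {r : ℝ | ∃ (x : X) (f : StrongDual 𝕜 X),
    ‖x‖ = 1 ∧ ‖f‖ = 1 ∧ f x = 1 ∧ r = ‖f (T x)‖}

/-- The numerical index of a normed space `X`:
`n(X) = inf {v(T) : T ∈ L(X), ‖T‖ = 1}`. -/
noncomputable def numIndex (𝕜 : Type*) [RCLike 𝕜] (X : Type*) [NormedAddCommGroup X]
    [NormedSpace 𝕜 X] : ℝ :=
  sInf {r : ℝ | ∃ T : X →L[𝕜] X, ‖T‖ = 1 ∧ r = numRadius 𝕜 X T}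

set_option linter.unusedSectionVars false

noncomputable section Aux
namespace NumIndexAux

section General
variable {X : Type*} [NormedAddCommGroup X] [NormedSpace ℝ X]

lemma radius_set_bddAbove (T : X →L[ℝ] X) :
    BddAbove {r : ℝ | ∃ (x : X) (f : StrongDual ℝ X),
      ‖x‖ = 1 ∧ ‖f‖ = 1 ∧ f x = 1 ∧ r = ‖f (T x)‖} := by
  refine ⟨‖T‖, fun r hr => ?_⟩
  obtain ⟨x, f, hx, hf, _, hr⟩ := hr
  calc r = ‖f (T x)‖ := hr
    _ ≤ ‖f‖ * ‖T x‖ := f.le_opNorm _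
    _ ≤ ‖f‖ * (‖T‖ * ‖x‖) := by
        exact mul_le_mul_of_nonneg_left (T.le_opNorm x) (norm_nonneg f)
    _ = ‖T‖ := by rw [hf, hx]; ring

lemma numRadius_nonneg (T : X →L[ℝ] X) : 0 ≤ numRadius ℝ X T :=
  Real.sSup_nonneg (fun r hr => by obtain ⟨x, f, _, _, _, hr⟩ := hr; rw [hr]; positivity)

lemma val_le_numRadius (T : X →L[ℝ] X) (x : X) (f : StrongDual ℝ X)
    (hx : ‖x‖ = 1) (hf : ‖f‖ = 1) (hfx : f x = 1) : ‖f (T x)‖ ≤ numRadius ℝ X T :=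
  le_csSup (radius_set_bddAbove T) ⟨x, f, hx, hf, hfx, rfl⟩

lemma numRadius_le (T : X →L[ℝ] X) (C : ℝ) (hC : 0 ≤ C)
    (h : ∀ (x : X) (f : StrongDual ℝ X),
      ‖x‖ = 1 → ‖f‖ = 1 → f x = 1 → ‖f (T x)‖ ≤ C) : numRadius ℝ X T ≤ C := by
  refine Real.sSup_le (fun r hr => ?_) hC
  obtain ⟨x, f, hx, hf, hfx, hr⟩ := hr
  rw [hr]; exact h x f hx hf hfx

lemma numIndex_le (T : X →L[ℝ] X) (hT : ‖T‖ = 1) : numIndex ℝ X ≤ numRadius ℝ X T := by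
  refine csInf_le ⟨0, fun r hr => ?_⟩ ⟨T, hT, rfl⟩
  obtain ⟨S, _, hr⟩ := hr
  rw [hr]; exact numRadius_nonneg S

lemma le_numIndex [Nontrivial X] (C : ℝ)
    (h : ∀ T : X →L[ℝ] X, ‖T‖ = 1 → C ≤ numRadius ℝ X T) : C ≤ numIndex ℝ X := by
  refine le_csInf ⟨numRadius ℝ X (ContinuousLinearMap.id ℝ X), ContinuousLinearMap.id ℝ X,
    ContinuousLinearMap.norm_id, rfl⟩ (fun r hr => ?_)
  obtain ⟨T, hT, hr⟩ := hr
  rw [hr]; exact h T hT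

end General

section Mfacts
variable {p : ℝ}

def Sset (p : ℝ) : Set ℝ := {r : ℝ | ∃ t ∈ Set.Icc (0:ℝ) 1, r = |t ^ (p - 1) - t| / (1 + t ^ p)}

lemma Sset_elem_nonneg {r : ℝ} (hr : r ∈ Sset p) : 0 ≤ r := by
  obtain ⟨t, ht, rfl⟩ := hr
  have h1 : (0:ℝ) < 1 + t ^ p := by
    have := Real.rpow_nonneg ht.1 p; linarith
  positivity

lemma Sset_elem_le_one (hp : 1 ≤ p) {r : ℝ} (hr : r ∈ Sset p) : r ≤ 1 := by
  obtain ⟨t, ht, rfl⟩ := hr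
  have h0 : (0:ℝ) ≤ t ^ p := Real.rpow_nonneg ht.1 p
  have h1 : t ^ (p-1) ≤ 1 := Real.rpow_le_one ht.1 ht.2 (by linarith)
  have h2 : (0:ℝ) ≤ t ^ (p-1) := Real.rpow_nonneg ht.1 _
  rw [div_le_one (by linarith)]
  rw [abs_le]
  constructor <;> [linarith [ht.1, ht.2]; linarith [ht.1, ht.2]]

lemma Sset_bddAbove (hp : 1 ≤ p) : BddAbove (Sset p) :=
  ⟨1, fun _ hr => Sset_elem_le_one hp hr⟩

lemma M_nonneg : 0 ≤ sSup (Sset p) :=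
  Real.sSup_nonneg (fun _ hr => Sset_elem_nonneg hr)

lemma M_le_one (hp : 1 ≤ p) : sSup (Sset p) ≤ 1 :=
  Real.sSup_le (fun _ hr => Sset_elem_le_one hp hr) zero_le_one

lemma le_M (hp : 1 ≤ p) {t : ℝ} (ht : t ∈ Set.Icc (0:ℝ) 1) :
    |t ^ (p - 1) - t| / (1 + t ^ p) ≤ sSup (Sset p) :=
  le_csSup (Sset_bddAbove hp) ⟨t, ht, rfl⟩

end Mfacts

section Elp
variable (p : ℝ)

abbrev Elp := PiLp (ENNReal.ofReal p) (fun _ : Fin 2 => ℝ)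

variable [Fact (1 ≤ ENNReal.ofReal p)]

def vec (r s : ℝ) : Elp p := (WithLp.equiv _ _).symm ![r, s]

variable {p}

lemma norm_apply (hp : 1 ≤ p) (y : Elp p) : ‖y‖ = (|y 0| ^ p + |y 1| ^ p) ^ (1/p) := by
  rw [PiLp.norm_eq_sum (by simp [ENNReal.toReal_ofReal (by linarith : (0:ℝ) ≤ p)]; linarith)]
  simp [Fin.sum_univ_two, ENNReal.toReal_ofReal (by linarith : (0:ℝ) ≤ p), Real.norm_eq_abs]

lemma norm_vec (hp : 1 ≤ p) (r s : ℝ) : ‖vec p r s‖ = (|r| ^ p + |s| ^ p) ^ (1/p) :=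
  norm_apply hp _

lemma norm_rpow (hp : 1 ≤ p) (y : Elp p) : ‖y‖ ^ p = |y 0| ^ p + |y 1| ^ p := by
  have h0 : (0:ℝ) ≤ |y 0| ^ p + |y 1| ^ p :=
    add_nonneg (Real.rpow_nonneg (abs_nonneg _) _) (Real.rpow_nonneg (abs_nonneg _) _)
  rw [norm_apply hp, one_div, Real.rpow_inv_rpow h0 (by linarith)]

lemma coord_le_norm (hp : 1 ≤ p) (y : Elp p) (i : Fin 2) : |y i| ≤ ‖y‖ := by
  have hp0 : 0 < p := lt_of_lt_of_le zero_lt_one hp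
  have h : |y i| ^ p ≤ |y 0| ^ p + |y 1| ^ p := by
    have h1 : (0:ℝ) ≤ |y 0| ^ p := Real.rpow_nonneg (abs_nonneg _) _
    have h2 : (0:ℝ) ≤ |y 1| ^ p := Real.rpow_nonneg (abs_nonneg _) _
    fin_cases i <;> simp <;> linarith
  calc |y i| = (|y i| ^ p) ^ (1/p) := by
        rw [one_div, Real.rpow_rpow_inv (abs_nonneg _) hp0.ne']
    _ ≤ (|y 0| ^ p + |y 1| ^ p) ^ (1/p) :=
        Real.rpow_le_rpow (Real.rpow_nonneg (abs_nonneg _) _) h (by positivity)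
    _ = ‖y‖ := (norm_apply hp y).symm


-- the functional y ↦ u * y 0 + v * y 1
def mkF (u v : ℝ) (h : ∀ y : Elp p, |u * y 0 + v * y 1| ≤ ‖y‖) : StrongDual ℝ (Elp p) :=
  LinearMap.mkContinuous
    { toFun := fun y => u * y 0 + v * y 1
      map_add' := fun x y => by show u * (x 0 + y 0) + v * (x 1 + y 1) = _; ring
      map_smul' := fun c y => by show u * (c * y 0) + v * (c * y 1) = c * _; ring }
    1 (fun y => by simpa using h y)

@[simp] lemma mkF_apply (u v : ℝ) (h) (y : Elp p) : mkF u v h y = u * y 0 + v * y 1 := rfl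

lemma norm_mkF (u v : ℝ) (h) (x : Elp p) (hx : ‖x‖ = 1) (hfx : mkF u v h x = 1) :
    ‖mkF u v h‖ = 1 := by
  refine le_antisymm (LinearMap.mkContinuous_norm_le _ zero_le_one _) ?_
  have := (mkF u v h).le_opNorm x
  rw [hfx, hx, mul_one] at this
  simpa using this

-- Hölder-type bound for p > 1
lemma holder2 (hp1 : 1 < p) (u v : ℝ)
    (huv : |u| ^ (p/(p-1)) + |v| ^ (p/(p-1)) ≤ 1) (y : Elp p) :
    |u * y 0 + v * y 1| ≤ ‖y‖ := by
  set q := p/(p-1) with hq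
  have hpq : Real.HolderConjugate q p := (Real.HolderConjugate.conjExponent hp1).symm
  have H := Real.inner_le_Lp_mul_Lq (s := Finset.univ)
      (f := ![|u|, |v|]) (g := ![|y 0|, |y 1|]) hpq
  simp only [Fin.sum_univ_two, Matrix.cons_val_zero, Matrix.cons_val_one, Matrix.head_cons,
    abs_abs] at H
  have h0 : |u * y 0 + v * y 1| ≤ |u| * |y 0| + |v| * |y 1| := by
    calc |u * y 0 + v * y 1| ≤ |u * y 0| + |v * y 1| := abs_add_le _ _
      _ = |u| * |y 0| + |v| * |y 1| := by rw [abs_mul, abs_mul]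
  have hq0 : 0 < q := div_pos (lt_trans zero_lt_one hp1) (by linarith)
  have h2 : ((|u| ^ q + |v| ^ q) ^ (1/q) : ℝ) ≤ 1 := by
    calc (|u| ^ q + |v| ^ q) ^ (1/q) ≤ 1 ^ (1/q) :=
          Real.rpow_le_rpow (by positivity) huv (one_div_nonneg.mpr hq0.le)
      _ = 1 := Real.one_rpow _
  have h3 : ((|y 0| ^ p + |y 1| ^ p) ^ (1/p) : ℝ) = ‖y‖ := (norm_apply hp1.le y).symm
  have h4 : (0:ℝ) ≤ (|y 0| ^ p + |y 1| ^ p) ^ (1/p) := by positivity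
  calc |u * y 0 + v * y 1| ≤ |u| * |y 0| + |v| * |y 1| := h0
    _ ≤ (|u| ^ q + |v| ^ q) ^ (1/q) * (|y 0| ^ p + |y 1| ^ p) ^ (1/p) := H
    _ ≤ 1 * ‖y‖ := by rw [h3]; exact mul_le_mul_of_nonneg_right h2 (h3 ▸ h4)
    _ = ‖y‖ := one_mul _



lemma abs_sign {s : ℝ} (hs : s = 1 ∨ s = -1) : |s| = 1 := by rcases hs with rfl | rfl <;> simp

lemma tpmul (hp : 1 ≤ p) {t : ℝ} (ht : 0 ≤ t) : t ^ (p-1) * t = t ^ p := by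
  rcases ht.eq_or_lt with rfl | ht'
  · rw [Real.zero_rpow (by positivity : p ≠ 0), mul_zero]
  · calc t ^ (p-1) * t = t ^ (p-1) * t ^ (1:ℝ) := by rw [Real.rpow_one]
      _ = t ^ (p - 1 + 1) := (Real.rpow_add ht' _ _).symm
      _ = t ^ p := by ring_nf

lemma pair_le (hp : 1 ≤ p) (T : Elp p →L[ℝ] Elp p) (x : Elp p) (u v : ℝ)
    (hb : ∀ y : Elp p, |u * y 0 + v * y 1| ≤ ‖y‖) (hx : ‖x‖ = 1)
    (hfx : u * x 0 + v * x 1 = 1) :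
    |u * (T x) 0 + v * (T x) 1| ≤ numRadius ℝ (Elp p) T := by
  have h := val_le_numRadius T x (mkF u v hb) hx
    (norm_mkF u v hb x hx (by simpa using hfx)) (by simpa using hfx)
  simpa [Real.norm_eq_abs] using h

section Family
variable {t s : ℝ}

lemma hD_pos (hp : 1 ≤ p) (ht : t ∈ Set.Icc (0:ℝ) 1) : (0:ℝ) < 1 + t ^ p := by
  have := Real.rpow_nonneg ht.1 p; linarith

lemma sq_sign {s : ℝ} (hs : s = 1 ∨ s = -1) : s * s = 1 := by
  rcases hs with rfl | rfl <;> norm_num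

lemma coeff_sum_le (hp1 : 1 < p) (ht : t ∈ Set.Icc (0:ℝ) 1) (hs : s = 1 ∨ s = -1) :
    |(1 + t^p) ^ (1/p - 1)| ^ (p/(p-1))
      + |s * t^(p-1) * ((1 + t^p) ^ (1/p - 1))| ^ (p/(p-1)) ≤ 1 := by
  have ht0 := ht.1
  have hp0 : (0:ℝ) < p := by linarith
  have hpm1 : p - 1 ≠ 0 := sub_ne_zero.2 (ne_of_gt hp1)
  have hD : (0:ℝ) < 1 + t^p := hD_pos hp1.le ht
  have hc1pos : (0:ℝ) < (1 + t^p) ^ (1/p - 1) := Real.rpow_pos_of_pos hD _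
  have hc1q : ((1 + t^p) ^ (1/p - 1)) ^ (p/(p-1)) = (1 + t^p)⁻¹ := by
    rw [← Real.rpow_mul hD.le, show (1/p - 1) * (p/(p-1)) = -1 by field_simp; ring,
      Real.rpow_neg_one]
  have htpq : (t ^ (p-1)) ^ (p/(p-1)) = t ^ p := by
    rw [← Real.rpow_mul ht0, show (p-1) * (p/(p-1)) = p by field_simp]
  have habs : |s * t^(p-1) * ((1 + t^p) ^ (1/p - 1))| = t^(p-1) * ((1 + t^p) ^ (1/p - 1)) := by
    rw [abs_mul, abs_mul, abs_sign hs, one_mul, abs_of_nonneg (Real.rpow_nonneg ht0 _),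
      abs_of_pos hc1pos]
  rw [habs, abs_of_pos hc1pos,
    Real.mul_rpow (Real.rpow_nonneg ht0 _) hc1pos.le, hc1q, htpq]
  refine le_of_eq ?_
  calc (1 + t^p)⁻¹ + t ^ p * (1 + t^p)⁻¹ = (1 + t^p) * (1 + t^p)⁻¹ := by ring
    _ = 1 := mul_inv_cancel₀ hD.ne'

lemma coeff_bound (hp : 1 ≤ p) (ht : t ∈ Set.Icc (0:ℝ) 1) (hs : s = 1 ∨ s = -1) :
    ∀ y : Elp p, |((1 + t^p) ^ (1/p - 1)) * y 0
      + (s * t^(p-1) * ((1 + t^p) ^ (1/p - 1))) * y 1| ≤ ‖y‖ := by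
  intro y
  rcases hp.eq_or_lt with h1 | hp1
  · subst h1
    rw [show (1:ℝ)/1 - 1 = 0 by norm_num, show (1:ℝ) - 1 = 0 by norm_num,
      Real.rpow_zero, Real.rpow_zero]
    have hn : ‖y‖ = |y 0| + |y 1| := by
      rw [norm_apply le_rfl y]; simp [Real.rpow_one]
    rw [hn]
    calc |1 * y 0 + s * 1 * 1 * y 1| ≤ |1 * y 0| + |s * 1 * 1 * y 1| := abs_add_le _ _
      _ = |y 0| + |y 1| := by
          rw [abs_mul, abs_mul, abs_mul, abs_mul, abs_sign hs]; simp
  · exact holder2 hp1 _ _ (coeff_sum_le hp1 ht hs) y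

lemma coeff_bound' (hp : 1 ≤ p) (ht : t ∈ Set.Icc (0:ℝ) 1) (hs : s = 1 ∨ s = -1) :
    ∀ y : Elp p, |(s * t^(p-1) * ((1 + t^p) ^ (1/p - 1))) * y 0
      + ((1 + t^p) ^ (1/p - 1)) * y 1| ≤ ‖y‖ := by
  intro y
  rcases hp.eq_or_lt with h1 | hp1
  · subst h1
    rw [show (1:ℝ)/1 - 1 = 0 by norm_num, show (1:ℝ) - 1 = 0 by norm_num,
      Real.rpow_zero, Real.rpow_zero]
    have hn : ‖y‖ = |y 0| + |y 1| := by
      rw [norm_apply le_rfl y]; simp [Real.rpow_one]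
    rw [hn]
    calc |s * 1 * 1 * y 0 + 1 * y 1| ≤ |s * 1 * 1 * y 0| + |1 * y 1| := abs_add_le _ _
      _ = |y 0| + |y 1| := by
          rw [abs_mul, abs_mul, abs_mul, abs_mul, abs_sign hs]; simp
  · refine holder2 hp1 _ _ ?_ y
    have := coeff_sum_le hp1 ht hs
    linarith

lemma xvec_norm (hp : 1 ≤ p) (ht : t ∈ Set.Icc (0:ℝ) 1) (hs : s = 1 ∨ s = -1) :
    ((1 + t^p) ^ (-(1/p):ℝ)) ^ p + |((1 + t^p) ^ (-(1/p):ℝ)) * (s*t)| ^ p = 1 := by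
  have ht0 := ht.1
  have hp0 : (0:ℝ) < p := by linarith
  have hD : (0:ℝ) < 1 + t^p := hD_pos hp ht
  have hκpos : (0:ℝ) < (1 + t^p) ^ (-(1/p):ℝ) := Real.rpow_pos_of_pos hD _
  have hκp : ((1 + t^p) ^ (-(1/p):ℝ)) ^ p = (1 + t^p)⁻¹ := by
    rw [← Real.rpow_mul hD.le, show -(1/p) * p = -1 by field_simp, Real.rpow_neg_one]
  have habs2 : |((1 + t^p) ^ (-(1/p):ℝ)) * (s*t)| = ((1 + t^p) ^ (-(1/p):ℝ)) * t := by
    rw [abs_mul, abs_of_pos hκpos, abs_mul, abs_sign hs, one_mul, abs_of_nonneg ht0]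
  rw [habs2, Real.mul_rpow hκpos.le ht0, hκp]
  calc (1 + t^p)⁻¹ + (1 + t^p)⁻¹ * t ^ p = (1 + t^p)⁻¹ * (1 + t^p) := by ring
    _ = 1 := inv_mul_cancel₀ hD.ne'

lemma c1κ (hp : 1 ≤ p) (ht : t ∈ Set.Icc (0:ℝ) 1) :
    ((1 + t^p) ^ (1/p - 1)) * ((1 + t^p) ^ (-(1/p):ℝ)) = (1 + t^p)⁻¹ := by
  have hD : (0:ℝ) < 1 + t^p := hD_pos hp ht
  rw [← Real.rpow_add hD, show 1/p - 1 + -(1/p) = -1 by ring, Real.rpow_neg_one]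

lemma family1 (hp : 1 ≤ p) (ht : t ∈ Set.Icc (0:ℝ) 1) (hs : s = 1 ∨ s = -1)
    (T : Elp p →L[ℝ] Elp p) :
    |(T (vec p 1 (s*t))) 0 + s * t^(p-1) * ((T (vec p 1 (s*t))) 1)| / (1 + t^p)
      ≤ numRadius ℝ (Elp p) T := by
  have ht0 := ht.1
  have hp0 : (0:ℝ) < p := by linarith
  have hD : (0:ℝ) < 1 + t^p := hD_pos hp ht
  have hκpos : (0:ℝ) < (1 + t^p) ^ (-(1/p):ℝ) := Real.rpow_pos_of_pos hD _
  set κ := (1 + t^p) ^ (-(1/p):ℝ) with hκdef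
  set c1 := (1 + t^p) ^ (1/p - 1) with hc1def
  set w := vec p 1 (s*t) with hwdef
  have hxw : vec p κ (κ*(s*t)) = κ • w := by
    ext i
    fin_cases i <;> · show _ = κ * _; simp [hwdef, vec, WithLp.equiv_symm_apply]
  have hxnorm : ‖vec p κ (κ*(s*t))‖ = 1 := by
    rw [norm_vec hp, abs_of_pos hκpos, xvec_norm hp ht hs, Real.one_rpow]
  have hfx : c1 * (vec p κ (κ*(s*t))) 0 + (s * t^(p-1) * c1) * (vec p κ (κ*(s*t))) 1 = 1 := by
    show c1 * κ + (s * t^(p-1) * c1) * (κ * (s * t)) = 1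
    calc c1 * κ + (s * t^(p-1) * c1) * (κ * (s * t))
        = c1 * κ + (c1 * κ) * ((s*s) * (t^(p-1) * t)) := by ring
      _ = c1 * κ + (c1 * κ) * (1 * t^p) := by rw [sq_sign hs, tpmul hp ht0]
      _ = (c1 * κ) * (1 + t^p) := by ring
      _ = (1 + t^p)⁻¹ * (1 + t^p) := by rw [c1κ hp ht]
      _ = 1 := inv_mul_cancel₀ hD.ne'
  have key := pair_le hp T (vec p κ (κ*(s*t))) c1 (s*t^(p-1)*c1)
    (coeff_bound hp ht hs) hxnorm hfx
  have hTx : T (vec p κ (κ*(s*t))) = κ • T w := by rw [hxw, _root_.map_smul]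
  have h0 : (T (vec p κ (κ*(s*t)))) 0 = κ * (T w) 0 := by rw [hTx]; rfl
  have h1 : (T (vec p κ (κ*(s*t)))) 1 = κ * (T w) 1 := by rw [hTx]; rfl
  rw [h0, h1, show c1 * (κ * (T w) 0) + s*t^(p-1)*c1 * (κ * (T w) 1)
      = (c1*κ) * ((T w) 0 + s*t^(p-1)*((T w) 1)) by ring, c1κ hp ht,
    abs_mul, abs_of_pos (inv_pos.2 hD), inv_mul_eq_div] at key
  exact key

lemma family2 (hp : 1 ≤ p) (ht : t ∈ Set.Icc (0:ℝ) 1) (hs : s = 1 ∨ s = -1)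
    (T : Elp p →L[ℝ] Elp p) :
    |s * t^(p-1) * ((T (vec p (s*t) 1)) 0) + (T (vec p (s*t) 1)) 1| / (1 + t^p)
      ≤ numRadius ℝ (Elp p) T := by
  have ht0 := ht.1
  have hp0 : (0:ℝ) < p := by linarith
  have hD : (0:ℝ) < 1 + t^p := hD_pos hp ht
  have hκpos : (0:ℝ) < (1 + t^p) ^ (-(1/p):ℝ) := Real.rpow_pos_of_pos hD _
  set κ := (1 + t^p) ^ (-(1/p):ℝ) with hκdef
  set c1 := (1 + t^p) ^ (1/p - 1) with hc1def
  set w := vec p (s*t) 1 with hwdef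
  have hxw : vec p (κ*(s*t)) κ = κ • w := by
    ext i
    fin_cases i <;> · show _ = κ * _; simp [hwdef, vec, WithLp.equiv_symm_apply]
  have hxnorm : ‖vec p (κ*(s*t)) κ‖ = 1 := by
    rw [norm_vec hp, abs_of_pos hκpos, add_comm, xvec_norm hp ht hs, Real.one_rpow]
  have hfx : (s * t^(p-1) * c1) * (vec p (κ*(s*t)) κ) 0 + c1 * (vec p (κ*(s*t)) κ) 1 = 1 := by
    show (s * t^(p-1) * c1) * (κ * (s * t)) + c1 * κ = 1
    calc (s * t^(p-1) * c1) * (κ * (s * t)) + c1 * κ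
        = c1 * κ + (c1 * κ) * ((s*s) * (t^(p-1) * t)) := by ring
      _ = c1 * κ + (c1 * κ) * (1 * t^p) := by rw [sq_sign hs, tpmul hp ht0]
      _ = (c1 * κ) * (1 + t^p) := by ring
      _ = (1 + t^p)⁻¹ * (1 + t^p) := by rw [c1κ hp ht]
      _ = 1 := inv_mul_cancel₀ hD.ne'
  have key := pair_le hp T (vec p (κ*(s*t)) κ) (s*t^(p-1)*c1) c1
    (coeff_bound' hp ht hs) hxnorm hfx
  have hTx : T (vec p (κ*(s*t)) κ) = κ • T w := by rw [hxw, _root_.map_smul]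
  have h0 : (T (vec p (κ*(s*t)) κ)) 0 = κ * (T w) 0 := by rw [hTx]; rfl
  have h1 : (T (vec p (κ*(s*t)) κ)) 1 = κ * (T w) 1 := by rw [hTx]; rfl
  rw [h0, h1, show s*t^(p-1)*c1 * (κ * (T w) 0) + c1 * (κ * (T w) 1)
      = (c1*κ) * (s*t^(p-1)*((T w) 0) + (T w) 1) by ring, c1κ hp ht,
    abs_mul, abs_of_pos (inv_pos.2 hD), inv_mul_eq_div] at key
  exact key

end Family

lemma vec_norm_le (hp : 1 ≤ p) (r s C : ℝ) (hC : 0 ≤ C) (y : Elp p)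
    (h0 : |r| ≤ C * |y 0|) (h1 : |s| ≤ C * |y 1|) : ‖vec p r s‖ ≤ C * ‖y‖ := by
  have hp0 : (0:ℝ) < p := by linarith
  rw [norm_vec hp, norm_apply hp]
  have e : C * ((|y 0|^p + |y 1|^p) ^ (1/p)) = (C^p * (|y 0|^p + |y 1|^p)) ^ (1/p) := by
    rw [Real.mul_rpow (Real.rpow_nonneg hC _) (by positivity), one_div,
      Real.rpow_rpow_inv hC hp0.ne']
  rw [e]
  refine Real.rpow_le_rpow (by positivity) ?_ (by positivity)
  have e0 : |r| ^ p ≤ C^p * |y 0|^p := by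
    calc |r| ^ p ≤ (C * |y 0|) ^ p :=
          Real.rpow_le_rpow (abs_nonneg r) h0 hp0.le
      _ = C^p * |y 0|^p := Real.mul_rpow hC (abs_nonneg _)
  have e1 : |s| ^ p ≤ C^p * |y 1|^p := by
    calc |s| ^ p ≤ (C * |y 1|) ^ p :=
          Real.rpow_le_rpow (abs_nonneg s) h1 hp0.le
      _ = C^p * |y 1|^p := Real.mul_rpow hC (abs_nonneg _)
  linarith

lemma lower_main (hp : 1 ≤ p) (T : Elp p →L[ℝ] Elp p) (hT : ‖T‖ = 1) :
    sSup (Sset p) / 2 ≤ numRadius ℝ (Elp p) T := by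
  have hp0 : (0:ℝ) < p := by linarith
  set M := sSup (Sset p) with hM
  set v := numRadius ℝ (Elp p) T with hv
  have hv0 : 0 ≤ v := numRadius_nonneg T
  set a := (T (vec p 1 0)) 0 with ha
  set c := (T (vec p 1 0)) 1 with hc
  set b := (T (vec p 0 1)) 0 with hb
  set d := (T (vec p 0 1)) 1 with hd
  have hdecomp : ∀ r s' : ℝ, T (vec p r s') = vec p (r*a + s'*b) (r*c + s'*d) := by
    intro r s'
    have hv1 : vec p r s' = r • vec p 1 0 + s' • vec p 0 1 := by
      ext i
      fin_cases i <;> · show _ = r * _ + s' * _; simp [vec]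
    rw [hv1, map_add, _root_.map_smul, _root_.map_smul]
    ext i
    fin_cases i <;> rfl
  -- values of the first family
  have hval1 : ∀ s : ℝ, s = 1 ∨ s = -1 → ∀ t : ℝ, 0 ≤ t →
      (T (vec p 1 (s*t))) 0 + s * t^(p-1) * ((T (vec p 1 (s*t))) 1)
        = a + t^p * d + s * (t*b + t^(p-1)*c) := by
    intro s hs t ht0
    rw [hdecomp]
    show 1*a + (s*t)*b + s * t^(p-1) * (1*c + (s*t)*d) = _
    have h1 : s * s = 1 := sq_sign hs
    have h2 : t^(p-1) * t = t^p := tpmul hp ht0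
    linear_combination (d * (t^(p-1)*t)) * h1 + d * h2
  have hval2 : ∀ s : ℝ, s = 1 ∨ s = -1 → ∀ t : ℝ, 0 ≤ t →
      s * t^(p-1) * ((T (vec p (s*t) 1)) 0) + (T (vec p (s*t) 1)) 1
        = t^p * a + d + s * (t^(p-1)*b + t*c) := by
    intro s hs t ht0
    rw [hdecomp]
    show s * t^(p-1) * ((s*t)*a + 1*b) + ((s*t)*c + 1*d) = _
    have h1 : s * s = 1 := sq_sign hs
    have h2 : t^(p-1) * t = t^p := tpmul hp ht0
    linear_combination (a * (t^(p-1)*t)) * h1 + a * h2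
  -- |a| ≤ v and |d| ≤ v
  have step1 : |a| ≤ v := by
    have k1 := family1 (t := 0) hp ⟨le_rfl, zero_le_one⟩ (Or.inl rfl) T
    have k2 := family1 (t := 0) hp ⟨le_rfl, zero_le_one⟩ (Or.inr rfl) T
    rw [hval1 1 (Or.inl rfl) 0 le_rfl] at k1
    rw [hval1 (-1) (Or.inr rfl) 0 le_rfl] at k2
    rw [Real.zero_rpow hp0.ne'] at k1 k2
    norm_num at k1 k2
    set w := (0:ℝ)^(p-1) * c
    have l1 := abs_le.1 k1
    have l2 := abs_le.1 k2
    rcases abs_cases a with ⟨he, _⟩ | ⟨he, _⟩ <;> rw [he] <;> linarith [l1.1, l1.2, l2.1, l2.2]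
  have step2 : |d| ≤ v := by
    have k1 := family2 (t := 0) hp ⟨le_rfl, zero_le_one⟩ (Or.inl rfl) T
    have k2 := family2 (t := 0) hp ⟨le_rfl, zero_le_one⟩ (Or.inr rfl) T
    rw [hval2 1 (Or.inl rfl) 0 le_rfl] at k1
    rw [hval2 (-1) (Or.inr rfl) 0 le_rfl] at k2
    rw [Real.zero_rpow hp0.ne'] at k1 k2
    norm_num at k1 k2
    have l1 := abs_le.1 k1
    have l2 := abs_le.1 k2
    rcases abs_cases d with ⟨he, _⟩ | ⟨he, _⟩ <;> rw [he] <;> linarith [l1.1, l1.2, l2.1, l2.2]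
  -- the off-diagonal bounds
  have step3 : ∀ t ∈ Set.Icc (0:ℝ) 1, |t*b + t^(p-1)*c| ≤ v * (1 + t^p) := by
    intro t ht
    have hD := hD_pos hp ht
    have k1 := family1 hp ht (Or.inl rfl) T
    have k2 := family1 hp ht (Or.inr rfl) T
    rw [hval1 1 (Or.inl rfl) t ht.1] at k1
    rw [hval1 (-1) (Or.inr rfl) t ht.1] at k2
    rw [div_le_iff₀ hD] at k1 k2
    have l1 := abs_le.1 k1
    have l2 := abs_le.1 k2
    refine abs_le.2 ⟨?_, ?_⟩ <;> · simp only [one_mul, neg_mul] at l1 l2; linarith [l1.1, l1.2, l2.1, l2.2]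
  have step4 : ∀ t ∈ Set.Icc (0:ℝ) 1, |t^(p-1)*b + t*c| ≤ v * (1 + t^p) := by
    intro t ht
    have hD := hD_pos hp ht
    have k1 := family2 hp ht (Or.inl rfl) T
    have k2 := family2 hp ht (Or.inr rfl) T
    rw [hval2 1 (Or.inl rfl) t ht.1] at k1
    rw [hval2 (-1) (Or.inr rfl) t ht.1] at k2
    rw [div_le_iff₀ hD] at k1 k2
    have l1 := abs_le.1 k1
    have l2 := abs_le.1 k2
    refine abs_le.2 ⟨?_, ?_⟩ <;> · simp only [one_mul, neg_mul] at l1 l2; linarith [l1.1, l1.2, l2.1, l2.2]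
  -- max(|b|,|c|) bound
  have stepB : ∀ t ∈ Set.Icc (0:ℝ) 1, |t^(p-1) - t| * max |b| |c| ≤ v * (1 + t^p) := by
    intro t ht
    have ht0 := ht.1
    have hα : (0:ℝ) ≤ t^(p-1) := Real.rpow_nonneg ht0 _
    have h3 := step3 t ht
    have h4 := step4 t ht
    have r1 : t*|b| - t^(p-1)*|c| ≤ v * (1 + t^p) := by
      have habs : |t*b| - |t^(p-1)*c| ≤ |t*b + t^(p-1)*c| := by
        have := abs_sub_abs_le_abs_sub (t*b) (-(t^(p-1)*c))
        simpa [sub_neg_eq_add] using this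
      rw [abs_mul, abs_mul, abs_of_nonneg ht0, abs_of_nonneg hα] at habs
      linarith
    have r2 : t^(p-1)*|b| - t*|c| ≤ v * (1 + t^p) := by
      have habs : |t^(p-1)*b| - |t*c| ≤ |t^(p-1)*b + t*c| := by
        have := abs_sub_abs_le_abs_sub (t^(p-1)*b) (-(t*c))
        simpa [sub_neg_eq_add] using this
      rw [abs_mul, abs_mul, abs_of_nonneg ht0, abs_of_nonneg hα] at habs
      linarith
    have r3 : t*|c| - t^(p-1)*|b| ≤ v * (1 + t^p) := by
      have habs : |t*c| - |t^(p-1)*b| ≤ |t^(p-1)*b + t*c| := by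
        have := abs_sub_abs_le_abs_sub (t*c) (-(t^(p-1)*b))
        have e : t*c - -(t^(p-1)*b) = t^(p-1)*b + t*c := by ring
        simpa [e] using this
      rw [abs_mul, abs_mul, abs_of_nonneg ht0, abs_of_nonneg hα] at habs
      linarith
    have r4 : t^(p-1)*|c| - t*|b| ≤ v * (1 + t^p) := by
      have habs : |t^(p-1)*c| - |t*b| ≤ |t*b + t^(p-1)*c| := by
        have := abs_sub_abs_le_abs_sub (t^(p-1)*c) (-(t*b))
        have e : t^(p-1)*c - -(t*b) = t*b + t^(p-1)*c := by ring
        simpa [e] using this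
      rw [abs_mul, abs_mul, abs_of_nonneg ht0, abs_of_nonneg hα] at habs
      linarith
    rcases le_total |c| |b| with hbc | hbc
    · rw [max_eq_left hbc]
      rcases abs_cases (t^(p-1) - t) with ⟨he, _⟩ | ⟨he, _⟩ <;> rw [he]
      · have hexp : (t^(p-1) - t)*|b| = t^(p-1)*|b| - t*|b| := by ring
        have hmono : t*|c| ≤ t*|b| := mul_le_mul_of_nonneg_left hbc ht0
        linarith
      · have hexp : -(t^(p-1) - t)*|b| = t*|b| - t^(p-1)*|b| := by ring
        have hmono : t^(p-1)*|c| ≤ t^(p-1)*|b| := mul_le_mul_of_nonneg_left hbc hα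
        linarith
    · rw [max_eq_right hbc]
      rcases abs_cases (t^(p-1) - t) with ⟨he, _⟩ | ⟨he, _⟩ <;> rw [he]
      · have hexp : (t^(p-1) - t)*|c| = t^(p-1)*|c| - t*|c| := by ring
        have hmono : t*|b| ≤ t*|c| := mul_le_mul_of_nonneg_left hbc ht0
        linarith
      · have hexp : -(t^(p-1) - t)*|c| = t*|c| - t^(p-1)*|c| := by ring
        have hmono : t^(p-1)*|b| ≤ t^(p-1)*|c| := mul_le_mul_of_nonneg_left hbc hα
        linarith
  -- M * max(|b|,|c|) ≤ v
  have hB0 : (0:ℝ) ≤ max |b| |c| := le_trans (abs_nonneg b) (le_max_left _ _)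
  have stepMB : M * max |b| |c| ≤ v := by
    rcases hB0.eq_or_lt with hB | hB
    · rw [← hB, mul_zero]; exact hv0
    · rw [← le_div_iff₀ hB]
      refine Real.sSup_le (fun r hr => ?_) (div_nonneg hv0 hB0)
      obtain ⟨t, ht, rfl⟩ := hr
      have hD := hD_pos hp ht
      rw [le_div_iff₀ hB, div_mul_eq_mul_div, div_le_iff₀ hD]
      calc |t^(p-1) - t| * max |b| |c| ≤ v * (1 + t^p) := stepB t ht
        _ = v * (1 + t^p) := rfl
    -- end
  -- operator norm bound
  have hTy_split : ∀ y : Elp p, T y = vec p ((y 0)*a) ((y 1)*d) + vec p ((y 1)*b) ((y 0)*c) := by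
    intro y
    have hy : y = vec p (y 0) (y 1) := by ext i; fin_cases i <;> rfl
    have h1 : T y = vec p ((y 0)*a + (y 1)*b) ((y 0)*c + (y 1)*d) := by
      conv_lhs => rw [hy]
      exact hdecomp _ _
    rw [h1]
    ext i
    fin_cases i
    · show y 0 * a + y 1 * b = y 0 * a + y 1 * b
      rfl
    · show y 0 * c + y 1 * d = y 1 * d + y 0 * c
      ring
  have hnorm1 : (1:ℝ) ≤ max |a| |d| + max |b| |c| := by
    have hA0 : (0:ℝ) ≤ max |a| |d| := le_trans (abs_nonneg a) (le_max_left _ _)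
    have hle : ‖T‖ ≤ max |a| |d| + max |b| |c| := by
      refine T.opNorm_le_bound (by positivity) (fun y => ?_)
      rw [hTy_split y]
      calc ‖vec p ((y 0)*a) ((y 1)*d) + vec p ((y 1)*b) ((y 0)*c)‖
          ≤ ‖vec p ((y 0)*a) ((y 1)*d)‖ + ‖vec p ((y 1)*b) ((y 0)*c)‖ := norm_add_le _ _
        _ ≤ max |a| |d| * ‖y‖ + max |b| |c| * ‖y‖ := by
            have key4 : ∀ (u w C : ℝ), |w| ≤ C → |u * w| ≤ C * |u| := by
              intro u w C h
              rw [abs_mul, mul_comm]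
              exact mul_le_mul_of_nonneg_right h (abs_nonneg u)
            have hswap : ‖vec p (y 1) (y 0)‖ = ‖y‖ := by
              rw [norm_vec hp, norm_apply hp, add_comm]
            refine add_le_add
              (vec_norm_le hp _ _ _ hA0 y (key4 _ _ _ (le_max_left _ _))
                (key4 _ _ _ (le_max_right _ _))) ?_
            have h2 := vec_norm_le hp ((y 1)*b) ((y 0)*c) _ hB0 (vec p (y 1) (y 0))
              (key4 _ _ _ (le_max_left _ _)) (key4 _ _ _ (le_max_right _ _))
            rw [hswap] at h2
            exact h2
        _ = (max |a| |d| + max |b| |c|) * ‖y‖ := by ring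
    rw [hT] at hle
    exact hle
  -- final assembly
  have hA : max |a| |d| ≤ v := max_le step1 step2
  have hM0 : 0 ≤ M := M_nonneg
  have hM1 : M ≤ 1 := M_le_one hp
  have hA0 : (0:ℝ) ≤ max |a| |d| := le_trans (abs_nonneg a) (le_max_left _ _)
  have key : M ≤ 2 * v := by
    calc M ≤ M * (max |a| |d| + max |b| |c|) := le_mul_of_one_le_right hM0 hnorm1
      _ = M * max |a| |d| + M * max |b| |c| := by ring
      _ ≤ max |a| |d| + v := add_le_add (mul_le_of_le_one_left hA0 hM1) stepMB
      _ ≤ v + v := add_le_add hA le_rfl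
      _ = 2 * v := by ring
  linarith

-- upper bound machinery

lemma rpow_mul_self {w : ℝ} (hw : 0 < w) (r : ℝ) : w ^ r * w = w ^ (r + 1) := by
  calc w ^ r * w = w ^ r * w ^ (1:ℝ) := by rw [Real.rpow_one]
    _ = w ^ (r + 1) := (Real.rpow_add hw _ _).symm

lemma hasDerivAt_abs_rpow (hp1 : 1 < p) (u : ℝ) :
    HasDerivAt (fun v : ℝ => |v| ^ p) (p * |u| ^ (p-2) * u) u := by
  rcases lt_trichotomy u 0 with hneg | rfl | hpos
  · have h0 : HasDerivAt (fun v : ℝ => -v) (-1) u := (hasDerivAt_id u).neg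
    have h2 : HasDerivAt (fun w : ℝ => w ^ p) (p * (-u) ^ (p-1)) (-u) :=
      Real.hasDerivAt_rpow_const (Or.inl (by linarith))
    have h1 : HasDerivAt (fun v : ℝ => (-v) ^ p) (p * (-u) ^ (p-1) * (-1)) u := h2.comp u h0
    have heq : (fun v : ℝ => |v| ^ p) =ᶠ[nhds u] (fun v => (-v) ^ p) := by
      filter_upwards [Iio_mem_nhds hneg] with v hv
      rw [abs_of_neg hv]
    have hres := h1.congr_of_eventuallyEq heq
    convert hres using 1
    case e'_4 => rfl
    case e'_5 => rfl
    have hmul : (-u) ^ (p-2) * (-u) = (-u) ^ (p-1) := by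
      rw [rpow_mul_self (by linarith) (p-2), show p - 2 + 1 = p - 1 by ring]
    rw [abs_of_neg hneg]
    linear_combination (-p) * hmul
  · have hz : HasDerivAt (fun v : ℝ => |v| ^ p) 0 0 := by
      rw [hasDerivAt_iff_tendsto_slope]
      have hcont : ContinuousAt (fun v : ℝ => |v| ^ (p-1)) 0 :=
        (Real.continuousAt_rpow_const _ _ (Or.inr (by linarith))).comp continuous_abs.continuousAt
      have h0 : Filter.Tendsto (fun v : ℝ => |v| ^ (p-1)) (nhds 0) (nhds 0) := by
        have := hcont.tendsto
        simpa [Real.zero_rpow (sub_ne_zero.2 (ne_of_gt hp1))] using this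
      refine squeeze_zero_norm' ?_ (h0.mono_left nhdsWithin_le_nhds)
      filter_upwards [self_mem_nhdsWithin] with v hv
      have hv0 : v ≠ 0 := hv
      have habs : 0 < |v| := abs_pos.2 hv0
      rw [slope_def_field, abs_zero, Real.zero_rpow (by positivity : p ≠ 0), sub_zero, sub_zero,
        Real.norm_eq_abs, abs_div, abs_of_nonneg (Real.rpow_nonneg (abs_nonneg v) p)]
      have hmul : |v| ^ (p-1) * |v| = |v| ^ p := by
        rw [rpow_mul_self habs (p-1), show p - 1 + 1 = p by ring]
      rw [← hmul, mul_div_assoc, div_self habs.ne', mul_one]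
    simpa using hz
  · have h2 : HasDerivAt (fun w : ℝ => w ^ p) (p * u ^ (p-1)) u :=
      Real.hasDerivAt_rpow_const (Or.inl hpos.ne')
    have heq : (fun v : ℝ => |v| ^ p) =ᶠ[nhds u] (fun v => v ^ p) := by
      filter_upwards [Ioi_mem_nhds hpos] with v hv
      rw [abs_of_pos hv]
    have hres := h2.congr_of_eventuallyEq heq
    convert hres using 1
    case e'_4 => rfl
    case e'_5 => rfl
    have hmul : u ^ (p-2) * u = u ^ (p-1) := by
      rw [rpow_mul_self hpos (p-2), show p - 2 + 1 = p - 1 by ring]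
    rw [abs_of_pos hpos]
    linear_combination p * hmul

def rotL : Elp p →ₗ[ℝ] Elp p where
  toFun := fun y => vec p (-(y 1)) (y 0)
  map_add' := fun x y => by
    ext i
    fin_cases i
    · show -((x 1) + (y 1)) = -(x 1) + -(y 1); ring
    · rfl
  map_smul' := fun c y => by
    ext i
    fin_cases i
    · show -(c * y 1) = c * -(y 1); ring
    · rfl

lemma rotL_norm (hp : 1 ≤ p) (y : Elp p) : ‖rotL y‖ = ‖y‖ := by
  show ‖vec p (-(y 1)) (y 0)‖ = ‖y‖
  rw [norm_vec hp, norm_apply hp, abs_neg, add_comm]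

def rot (hp : 1 ≤ p) : Elp p →L[ℝ] Elp p :=
  LinearMap.mkContinuous rotL 1 (fun y => by rw [rotL_norm hp y, one_mul])

lemma norm_e0 (hp : 1 ≤ p) : ‖vec p 1 0‖ = 1 := by
  have hp0 : (0:ℝ) < p := by linarith
  rw [norm_vec hp, abs_one, abs_zero, Real.one_rpow, Real.zero_rpow hp0.ne', add_zero,
    Real.one_rpow]

lemma rot_norm (hp : 1 ≤ p) : ‖rot hp‖ = 1 := by
  refine le_antisymm (LinearMap.mkContinuous_norm_le _ zero_le_one _) ?_
  have hp0 : (0:ℝ) < p := by linarith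
  have h1 : ‖rot hp (vec p 1 0)‖ = 1 := by
    rw [show rot hp (vec p 1 0) = vec p (-(0:ℝ)) 1 from rfl, norm_vec hp, neg_zero, abs_zero,
      abs_one, Real.one_rpow, Real.zero_rpow hp0.ne', zero_add, Real.one_rpow]
  have h2 := (rot hp).le_opNorm (vec p 1 0)
  rw [h1, norm_e0 hp, mul_one] at h2
  exact h2

lemma deriv_pinch (x w : Elp p) (f : StrongDual ℝ (Elp p)) (hx : ‖x‖ = 1) (hf : ‖f‖ = 1)
    (hfx : f x = 1) (L : ℝ) (hD : HasDerivAt (fun h : ℝ => ‖x + h • w‖) L 0) : f w = L := by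
  have key : ∀ h : ℝ, 1 + h * f w ≤ ‖x + h • w‖ := by
    intro h
    calc 1 + h * f w = f (x + h • w) := by rw [map_add, _root_.map_smul, hfx, smul_eq_mul]
      _ ≤ |f (x + h • w)| := le_abs_self _
      _ = ‖f (x + h • w)‖ := (Real.norm_eq_abs _).symm
      _ ≤ ‖f‖ * ‖x + h • w‖ := f.le_opNorm _
      _ = ‖x + h • w‖ := by rw [hf, one_mul]
  have h00 : ‖x + (0:ℝ) • w‖ = 1 := by rw [zero_smul, add_zero, hx]
  have hslope := hasDerivAt_iff_tendsto_slope.1 hD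
  have hgt : f w ≤ L := by
    have ht : Filter.Tendsto (slope (fun h : ℝ => ‖x + h • w‖) 0)
        (nhdsWithin 0 (Set.Ioi 0)) (nhds L) :=
      hslope.mono_left (nhdsWithin_mono _ (fun y hy => ne_of_gt hy))
    refine ge_of_tendsto ht ?_
    filter_upwards [self_mem_nhdsWithin] with h hh
    have hh0 : (0:ℝ) < h := hh
    rw [slope_def_field, h00, sub_zero, le_div_iff₀ hh0]
    have := key h
    linarith
  have hlt : L ≤ f w := by
    have ht : Filter.Tendsto (slope (fun h : ℝ => ‖x + h • w‖) 0)
        (nhdsWithin 0 (Set.Iio 0)) (nhds L) :=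
      hslope.mono_left (nhdsWithin_mono _ (fun y hy => ne_of_lt hy))
    refine le_of_tendsto ht ?_
    filter_upwards [self_mem_nhdsWithin] with h hh
    have hh0 : h < 0 := hh
    rw [slope_def_field, h00, sub_zero, div_le_iff_of_neg hh0]
    have := key h
    linarith
  linarith

lemma Lbound_ordered (hp : 1 ≤ p) {α β : ℝ} (hα : 0 < α) (hβ : 0 < β) (hβα : β ≤ α)
    (hsum : α^p + β^p = 1) : |α*β*(β^(p-2) - α^(p-2))| ≤ sSup (Sset p) := by
  have hp0 : (0:ℝ) < p := by linarith
  set t := β / α with htdef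
  have ht0 : 0 < t := div_pos hβ hα
  have ht1 : t ≤ 1 := (div_le_one hα).2 hβα
  have hβt : β = t * α := (div_mul_cancel₀ β hα.ne').symm
  have e1 : t^(p-2) * t = t^(p-1) := by
    rw [rpow_mul_self ht0 (p-2), show p-2+1 = p-1 by ring]
  have e2 : α^(p-2) * α = α^(p-1) := by
    rw [rpow_mul_self hα (p-2), show p-2+1 = p-1 by ring]
  have e3 : α^(p-1) * α = α^p := by
    rw [rpow_mul_self hα (p-1), show p-1+1 = p by ring]
  have h1 : α * β * β^(p-2) = t^(p-1) * α^p := by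
    rw [hβt, Real.mul_rpow ht0.le hα.le]
    linear_combination (α^2 * α^(p-2)) * e1 + (t^(p-1) * α) * e2 + t^(p-1) * e3
  have h2 : α * β * α^(p-2) = t * α^p := by
    rw [hβt]
    linear_combination (t * α) * e2 + t * e3
  have hαp : α^p * (1 + t^p) = 1 := by
    rw [hβt, Real.mul_rpow ht0.le hα.le] at hsum
    linear_combination hsum
  have hαppos : 0 < α^p := Real.rpow_pos_of_pos hα p
  have hDpos : (0:ℝ) < 1 + t^p := by positivity
  have hexpr : |α*β*(β^(p-2) - α^(p-2))| = |t^(p-1) - t| / (1 + t^p) := by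
    have he : α*β*(β^(p-2) - α^(p-2)) = (t^(p-1) - t) * α^p := by
      linear_combination h1 - h2
    rw [he, abs_mul, abs_of_pos hαppos, eq_div_iff hDpos.ne', mul_assoc, hαp, mul_one]
  rw [hexpr]
  exact le_M hp ⟨ht0.le, ht1⟩

lemma Lbound (hp : 1 ≤ p) {α β : ℝ} (hα : 0 < α) (hβ : 0 < β)
    (hsum : α^p + β^p = 1) : |α*β*(β^(p-2) - α^(p-2))| ≤ sSup (Sset p) := by
  rcases le_total β α with h | h
  · exact Lbound_ordered hp hα hβ h hsum
  · have hres := Lbound_ordered hp hβ hα h (by linarith)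
    have e : |β*α*(α^(p-2) - β^(p-2))| = |α*β*(β^(p-2) - α^(p-2))| := by
      rw [show β*α*(α^(p-2) - β^(p-2)) = -(α*β*(β^(p-2) - α^(p-2))) by ring, abs_neg]
    rwa [e] at hres

lemma upper_main (hp1 : 1 < p) (x : Elp p) (f : StrongDual ℝ (Elp p)) (hx : ‖x‖ = 1)
    (hf : ‖f‖ = 1) (hfx : f x = 1) : |f (rot hp1.le x)| ≤ sSup (Sset p) := by
  have hp := hp1.le
  have hp0 : (0:ℝ) < p := by linarith
  have hsum : |x 0|^p + |x 1|^p = 1 := by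
    have h := norm_apply hp x
    rw [hx] at h
    have h0 : (0:ℝ) ≤ |x 0|^p + |x 1|^p := by positivity
    have h2 : (1:ℝ)^p = ((|x 0|^p + |x 1|^p) ^ ((1:ℝ)/p))^p := by rw [← h]
    rw [Real.one_rpow, one_div, Real.rpow_inv_rpow h0 hp0.ne'] at h2
    exact h2.symm
  -- derivative of the two coordinate terms
  have hinner1 : HasDerivAt (fun h : ℝ => x 0 - h * x 1) (-(x 1)) 0 := by
    simpa using ((hasDerivAt_id (0:ℝ)).mul_const (x 1)).const_sub (x 0)
  have houter1 : HasDerivAt (fun v : ℝ => |v|^p) (p * |x 0|^(p-2) * (x 0)) (x 0 - 0 * x 1) := by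
    rw [show x 0 - 0 * x 1 = x 0 by ring]
    exact hasDerivAt_abs_rpow hp1 (x 0)
  have hA1 : HasDerivAt (fun h : ℝ => |x 0 - h * x 1| ^ p)
      ((p * |x 0|^(p-2) * (x 0)) * (-(x 1))) 0 := by have := houter1.comp 0 hinner1; exact this
  have hinner2 : HasDerivAt (fun h : ℝ => x 1 + h * x 0) (x 0) 0 := by
    simpa using ((hasDerivAt_id (0:ℝ)).mul_const (x 0)).const_add (x 1)
  have houter2 : HasDerivAt (fun v : ℝ => |v|^p) (p * |x 1|^(p-2) * (x 1)) (x 1 + 0 * x 0) := by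
    rw [show x 1 + 0 * x 0 = x 1 by ring]
    exact hasDerivAt_abs_rpow hp1 (x 1)
  have hA2 : HasDerivAt (fun h : ℝ => |x 1 + h * x 0| ^ p)
      ((p * |x 1|^(p-2) * (x 1)) * (x 0)) 0 := by have := houter2.comp 0 hinner2; exact this
  have hg := hA1.add hA2
  have hgval : |x 0 - 0 * x 1|^p + |x 1 + 0 * x 0|^p = 1 := by
    rw [show x 0 - 0 * x 1 = x 0 by ring, show x 1 + 0 * x 0 = x 1 by ring]
    exact hsum
  have hout : HasDerivAt (fun u : ℝ => u ^ ((1:ℝ)/p)) ((1:ℝ)/p)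
      (|x 0 - 0 * x 1|^p + |x 1 + 0 * x 0|^p) := by
    rw [hgval]
    have hh := Real.hasDerivAt_rpow_const (x := (1:ℝ)) (p := (1:ℝ)/p) (Or.inl one_ne_zero)
    simpa using hh
  have hφ := hout.comp (0:ℝ) hg
  have hfun : (fun h : ℝ => ‖x + h • rot hp1.le x‖)
      = (fun h : ℝ => (|x 0 - h * x 1|^p + |x 1 + h * x 0|^p) ^ ((1:ℝ)/p)) := by
    funext h
    rw [norm_apply hp]
    have c0 : (x + h • rot hp1.le x) 0 = x 0 - h * x 1 := by
      show x 0 + h * (-(x 1)) = _; ring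
    have c1 : (x + h • rot hp1.le x) 1 = x 1 + h * x 0 := by
      show x 1 + h * (x 0) = _; ring
    rw [c0, c1]
  have hDD : HasDerivAt (fun h : ℝ => ‖x + h • rot hp1.le x‖)
      (((1:ℝ)/p) * ((p * |x 0|^(p-2) * (x 0)) * (-(x 1)) + (p * |x 1|^(p-2) * (x 1)) * (x 0)))
      0 := by
    rw [hfun]
    exact hφ
  have hfw := deriv_pinch x (rot hp1.le x) f hx hf hfx _ hDD
  rw [hfw, show ((1:ℝ)/p) * ((p * |x 0|^(p-2) * (x 0)) * (-(x 1)) + (p * |x 1|^(p-2) * (x 1)) * (x 0))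
      = x 0 * x 1 * (|x 1|^(p-2) - |x 0|^(p-2)) by field_simp; ring]
  rcases eq_or_ne (x 0) 0 with h0 | h0
  · rw [h0]
    simpa using M_nonneg (p := p)
  rcases eq_or_ne (x 1) 0 with h1 | h1
  · rw [h1]
    simpa using M_nonneg (p := p)
  have hres := Lbound hp (abs_pos.2 h0) (abs_pos.2 h1) hsum
  have e : |x 0 * x 1 * (|x 1|^(p-2) - |x 0|^(p-2))|
      = |(|x 0|) * (|x 1|) * ((|x 1|)^(p-2) - (|x 0|)^(p-2))| := by
    rw [abs_mul, abs_mul, abs_mul, abs_mul, abs_abs, abs_abs]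
  rw [e]
  exact hres

instance : Nontrivial (Elp p) :=
  ⟨vec p 0 0, vec p 1 0, fun h => by
    have h0 := congrArg (fun z : Elp p => z 0) h
    exact zero_ne_one h0⟩

end Elp
end NumIndexAux

open NumIndexAux

/-- For `1 ≤ p < ∞`, the numerical index of the real space `ℓ_p²` satisfies
`(1/2)·M_p ≤ n(ℓ_p²) ≤ M_p`, where `M_p = sup_{t ∈ [0,1]} |t^{p-1} − t| / (1 + t^p)`. -/
theorem numIndex_lp_two_dim_bounds (p : ℝ) (hp : 1 ≤ p) [Fact (1 ≤ ENNReal.ofReal p)] :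
    (1 / 2) * sSup {r : ℝ | ∃ t ∈ Set.Icc (0:ℝ) 1, r = |t ^ (p - 1) - t| / (1 + t ^ p)}
      ≤ numIndex ℝ (PiLp (ENNReal.ofReal p) (fun _ : Fin 2 => ℝ)) ∧
    numIndex ℝ (PiLp (ENNReal.ofReal p) (fun _ : Fin 2 => ℝ))
      ≤ sSup {r : ℝ | ∃ t ∈ Set.Icc (0:ℝ) 1, r = |t ^ (p - 1) - t| / (1 + t ^ p)} := by
  constructor
  · -- lower bound
    have hlow : sSup (Sset p) / 2 ≤ numIndex ℝ (Elp p) :=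
      le_numIndex _ (fun T hT => lower_main hp T hT)
    show (1 / 2) * sSup (Sset p) ≤ numIndex ℝ (Elp p)
    linarith
  · show numIndex ℝ (Elp p) ≤ sSup (Sset p)
    rcases hp.eq_or_lt with h1 | hp1
    · -- p = 1
      subst h1
      have hM1 : (1:ℝ) ∈ Sset 1 :=
        ⟨0, ⟨le_rfl, zero_le_one⟩, by
          rw [show (1:ℝ)-1 = 0 by norm_num, Real.rpow_zero, Real.rpow_one]
          norm_num⟩
      have hge1 : 1 ≤ sSup (Sset 1) := le_csSup (Sset_bddAbove le_rfl) hM1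
      have hid : numIndex ℝ (Elp 1)
          ≤ numRadius ℝ (Elp 1) (ContinuousLinearMap.id ℝ (Elp 1)) :=
        numIndex_le _ ContinuousLinearMap.norm_id
      have hrad : numRadius ℝ (Elp 1) (ContinuousLinearMap.id ℝ (Elp 1)) ≤ 1 :=
        numRadius_le _ 1 zero_le_one (fun x f hx hf hfx => by simp [hfx])
      linarith
    · have h1 := numIndex_le (rot hp) (rot_norm hp)
      have h2 : numRadius ℝ (Elp p) (rot hp) ≤ sSup (Sset p) :=
        numRadius_le _ _ M_nonneg (fun x f hx hf hfx => by
          rw [Real.norm_eq_abs]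
          exact upper_main hp1 x f hx hf hfx)
      linarith
end Aux
end

section
/- Let {X_λ : λ ∈ Λ} be a nonempty family of nonzero Banach spaces (all over the same scalar field). Then the numerical index of the c₀-sum, of the ℓ₁-sum, and of the ℓ_∞-sum of the family all coincide with inf_λ n(X_λ). -/
open MeasureTheory NormedSpace Metric Filter
open scoped ENNReal NNReal Topology

/-- The `c₀`-sum of a family of normed spaces, realized as the closed subspace of the
`ℓ_∞`-sum consisting of those families `(x_i)` whose norms `(‖x_i‖)` vanish at infinity. -/
noncomputable def c0Sum (𝕜 : Type*) [RCLike 𝕜] {ι : Type*} (E : ι → Type*)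
    [∀ i, NormedAddCommGroup (E i)] [∀ i, NormedSpace 𝕜 (E i)] : Submodule 𝕜 (lp E ∞) where
  carrier := {f | Filter.Tendsto (fun i => ‖f i‖) Filter.cofinite (𝓝 0)}
  add_mem' := by
    intro f g hf hg
    have h : Filter.Tendsto (fun i => ‖f i‖ + ‖g i‖) Filter.cofinite (𝓝 0) := by
      simpa using hf.add hg
    refine squeeze_zero (fun i => norm_nonneg _) (fun i => ?_) h
    simpa [lp.coeFn_add] using norm_add_le (f i) (g i)
  zero_mem' := by
    have h : (fun i => ‖(0 : lp E ∞) i‖) = fun _ => (0 : ℝ) := by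
      funext i
      simp [lp.coeFn_zero]
    simpa [Set.mem_setOf_eq, h] using (tendsto_const_nhds :
      Filter.Tendsto (fun _ : ι => (0 : ℝ)) Filter.cofinite (𝓝 0))
  smul_mem' := by
    intro c f hf
    have h : Filter.Tendsto (fun i => ‖c‖ * ‖f i‖) Filter.cofinite (𝓝 0) := by
      simpa using hf.const_mul ‖c‖
    refine squeeze_zero (fun i => norm_nonneg _) (fun i => ?_) h
    simp [lp.coeFn_smul, norm_smul]

section Helpers

variable {𝕜 : Type*} [RCLike 𝕜] {X Y : Type*} [NormedAddCommGroup X] [NormedSpace 𝕜 X]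
  [NormedAddCommGroup Y] [NormedSpace 𝕜 Y]

/-- A norming pair exists in a nontrivial space. -/
lemma exists_num_pair (𝕜 : Type*) [RCLike 𝕜] (X : Type*) [NormedAddCommGroup X]
    [NormedSpace 𝕜 X] [Nontrivial X] :
    ∃ (x : X) (f : StrongDual 𝕜 X), ‖x‖ = 1 ∧ ‖f‖ = 1 ∧ f x = 1 := by
  obtain ⟨x₀, hx₀⟩ := exists_ne (0 : X)
  set x : X := (‖x₀‖ : 𝕜)⁻¹ • x₀ with hxdef
  have hx : ‖x‖ = 1 := by
    rw [hxdef, norm_smul, norm_inv, RCLike.norm_ofReal, abs_of_nonneg (norm_nonneg _)]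
    field_simp [norm_ne_zero_iff.2 hx₀]
  obtain ⟨f, hf1, hf2⟩ := exists_dual_vector 𝕜 x (by rw [← norm_ne_zero_iff, hx]; norm_num)
  exact ⟨x, f, hx, hf1, by rw [hf2, hx, RCLike.ofReal_one]⟩

lemma radius_set_bddAbove (T : X →L[𝕜] X) :
    BddAbove {r : ℝ | ∃ (x : X) (f : StrongDual 𝕜 X),
      ‖x‖ = 1 ∧ ‖f‖ = 1 ∧ f x = 1 ∧ r = ‖f (T x)‖} := by
  refine ⟨‖T‖, ?_⟩
  rintro r ⟨x, f, hx, hf, -, rfl⟩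
  calc ‖f (T x)‖ ≤ ‖f‖ * ‖T x‖ := f.le_opNorm _
    _ ≤ 1 * (‖T‖ * ‖x‖) := by rw [hf]; gcongr; exact T.le_opNorm x
    _ = ‖T‖ := by rw [hx]; ring

lemma pair_le_numRadius {T : X →L[𝕜] X} {x : X} {f : StrongDual 𝕜 X}
    (hx : ‖x‖ = 1) (hf : ‖f‖ = 1) (hfx : f x = 1) :
    ‖f (T x)‖ ≤ numRadius 𝕜 X T :=
  le_csSup (radius_set_bddAbove T) ⟨x, f, hx, hf, hfx, rfl⟩

lemma numRadius_nonneg [Nontrivial X] (T : X →L[𝕜] X) : 0 ≤ numRadius 𝕜 X T := by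
  obtain ⟨x, f, hx, hf, hfx⟩ := exists_num_pair 𝕜 X
  exact le_trans (norm_nonneg _) (pair_le_numRadius hx hf hfx)

lemma numRadius_le [Nontrivial X] {T : X →L[𝕜] X} {c : ℝ}
    (h : ∀ (x : X) (f : StrongDual 𝕜 X), ‖x‖ = 1 → ‖f‖ = 1 → f x = 1 →
      ‖f (T x)‖ ≤ c) : numRadius 𝕜 X T ≤ c := by
  refine csSup_le ?_ ?_
  · obtain ⟨x, f, hx, hf, hfx⟩ := exists_num_pair 𝕜 X
    exact ⟨_, x, f, hx, hf, hfx, rfl⟩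
  · rintro r ⟨x, f, hx, hf, hfx, rfl⟩
    exact h x f hx hf hfx

lemma index_set_bddBelow [Nontrivial X] :
    BddBelow {r : ℝ | ∃ T : X →L[𝕜] X, ‖T‖ = 1 ∧ r = numRadius 𝕜 X T} := by
  refine ⟨0, ?_⟩
  rintro r ⟨T, -, rfl⟩
  exact numRadius_nonneg T

lemma numIndex_nonneg (𝕜 : Type*) [RCLike 𝕜] (X : Type*) [NormedAddCommGroup X]
    [NormedSpace 𝕜 X] [Nontrivial X] : 0 ≤ numIndex 𝕜 X := by
  apply Real.sInf_nonneg
  rintro r ⟨T, -, rfl⟩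
  exact numRadius_nonneg T

lemma numIndex_le_numRadius [Nontrivial X] {T : X →L[𝕜] X} (hT : ‖T‖ = 1) :
    numIndex 𝕜 X ≤ numRadius 𝕜 X T :=
  csInf_le index_set_bddBelow ⟨T, hT, rfl⟩

lemma numRadius_smul [Nontrivial X] (c : 𝕜) (T : X →L[𝕜] X) :
    numRadius 𝕜 X (c • T) = ‖c‖ * numRadius 𝕜 X T := by
  have key : ∀ (a : 𝕜) (S : X →L[𝕜] X), numRadius 𝕜 X (a • S) ≤ ‖a‖ * numRadius 𝕜 X S := by
    intro a S
    refine numRadius_le fun x f hx hf hfx => ?_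
    have : f ((a • S) x) = a * f (S x) := by simp
    rw [this, norm_mul]
    exact mul_le_mul_of_nonneg_left (pair_le_numRadius hx hf hfx) (norm_nonneg a)
  refine le_antisymm (key c T) ?_
  rcases eq_or_ne c 0 with rfl | hc
  · rw [zero_smul, norm_zero, zero_mul]
    exact numRadius_nonneg _
  · have := key c⁻¹ (c • T)
    rw [smul_smul, inv_mul_cancel₀ hc, one_smul, norm_inv] at this
    have hc' : 0 < ‖c‖ := norm_pos_iff.2 hc
    calc ‖c‖ * numRadius 𝕜 X T ≤ ‖c‖ * (‖c‖⁻¹ * numRadius 𝕜 X (c • T)) := by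
          exact mul_le_mul_of_nonneg_left this hc'.le
      _ = numRadius 𝕜 X (c • T) := by field_simp

lemma index_mul_norm_le_numRadius [Nontrivial X] (S : X →L[𝕜] X) :
    numIndex 𝕜 X * ‖S‖ ≤ numRadius 𝕜 X S := by
  rcases eq_or_ne ‖S‖ 0 with h0 | h0
  · rw [h0, mul_zero]; exact numRadius_nonneg S
  have hpos : 0 < ‖S‖ := lt_of_le_of_ne (norm_nonneg _) (Ne.symm h0)
  set T : X →L[𝕜] X := ((‖S‖ : ℝ) : 𝕜)⁻¹ • S with hTdef
  have hT : ‖T‖ = 1 := by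
    rw [hTdef, norm_smul _ S, norm_inv, RCLike.norm_ofReal, abs_of_nonneg (norm_nonneg _)]
    field_simp
  have := numIndex_le_numRadius (𝕜 := 𝕜) hT
  have hrad : numRadius 𝕜 X T = ‖S‖⁻¹ * numRadius 𝕜 X S := by
    rw [hTdef, numRadius_smul, norm_inv, RCLike.norm_ofReal, abs_of_nonneg (norm_nonneg _)]
  rw [hrad] at this
  calc numIndex 𝕜 X * ‖S‖ ≤ (‖S‖⁻¹ * numRadius 𝕜 X S) * ‖S‖ :=
        mul_le_mul_of_nonneg_right this hpos.le
    _ = numRadius 𝕜 X S := by field_simp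

/-- operator-norm approximation -/
lemma exists_le_one_lt_apply (f : X →L[𝕜] Y) {c : ℝ} (hc : c < ‖f‖) :
    ∃ x : X, ‖x‖ ≤ 1 ∧ c < ‖f x‖ := by
  by_contra h
  push_neg at h
  have hc0 : 0 ≤ c := le_trans (norm_nonneg _) (h 0 (by simp))
  have : ‖f‖ ≤ c := by
    refine f.opNorm_le_bound hc0 fun x => ?_
    rcases eq_or_ne x 0 with rfl | hx
    · simp
    · have hxn : (0:ℝ) < ‖x‖ := norm_pos_iff.2 hx
      have h1 : ‖(((‖x‖ : ℝ) : 𝕜))⁻¹ • x‖ ≤ 1 := by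
        rw [norm_smul, norm_inv, RCLike.norm_ofReal, abs_of_nonneg (norm_nonneg _)]
        field_simp
        exact le_rfl
      have := h _ h1
      rw [_root_.map_smul, norm_smul, norm_inv, RCLike.norm_ofReal, abs_of_nonneg (norm_nonneg _)] at this
      calc ‖f x‖ = ‖x‖ * (‖x‖⁻¹ * ‖f x‖) := by field_simp
        _ ≤ ‖x‖ * c := by
            refine mul_le_mul_of_nonneg_left ?_ hxn.le
            exact this
        _ = c * ‖x‖ := mul_comm _ _
  exact absurd hc (not_lt.2 this)

/-- phase alignment of two scalars -/
lemma exists_align (c₁ c₂ : 𝕜) : ∃ α : 𝕜, ‖α‖ = 1 ∧ ‖c₁ + α * c₂‖ = ‖c₁‖ + ‖c₂‖ := by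
  rcases eq_or_ne c₁ 0 with rfl | h1
  · rcases eq_or_ne c₂ 0 with rfl | h2
    · exact ⟨1, by simp, by simp⟩
    · refine ⟨(‖c₂‖ : 𝕜) / c₂, ?_, ?_⟩
      · rw [norm_div, RCLike.norm_ofReal, abs_norm, div_self (norm_ne_zero_iff.2 h2)]
      · rw [zero_add, div_mul_cancel₀ _ h2, RCLike.norm_ofReal, abs_norm, norm_zero, zero_add]
  · rcases eq_or_ne c₂ 0 with rfl | h2
    · exact ⟨1, by simp, by simp⟩
    · have h1' : ‖c₁‖ ≠ 0 := norm_ne_zero_iff.2 h1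
      have h2' : ‖c₂‖ ≠ 0 := norm_ne_zero_iff.2 h2
      have h1k : ((‖c₁‖ : ℝ) : 𝕜) ≠ 0 := by simpa using h1'
      refine ⟨(‖c₂‖ : 𝕜) * c₁ / (c₂ * (‖c₁‖ : 𝕜)), ?_, ?_⟩
      · rw [norm_div, norm_mul, norm_mul, RCLike.norm_ofReal, RCLike.norm_ofReal,
          abs_norm, abs_norm]
        field_simp
      · have hα : (‖c₂‖ : 𝕜) * c₁ / (c₂ * (‖c₁‖ : 𝕜)) * c₂ = ((‖c₂‖ / ‖c₁‖ : ℝ) : 𝕜) * c₁ := by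
          push_cast
          field_simp
        have hsum : c₁ + ((‖c₂‖ / ‖c₁‖ : ℝ) : 𝕜) * c₁ = (((1 + ‖c₂‖ / ‖c₁‖ : ℝ)) : 𝕜) * c₁ := by
          push_cast
          ring
        rw [hα, hsum, norm_mul, RCLike.norm_ofReal,
          abs_of_nonneg (by positivity : (0:ℝ) ≤ 1 + ‖c₂‖ / ‖c₁‖)]
        field_simp

/-- scalars with `re z = ‖z‖`-type conclusion -/
lemma eq_ofReal_of_re_eq {z : 𝕜} {t : ℝ} (h : RCLike.re z = t) (h' : ‖z‖ ≤ t) :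
    z = (t : 𝕜) := by
  have h2 : ‖z‖ ≤ RCLike.re z := h ▸ h'
  have := RCLike.re_eq_self_of_le h2
  rw [← this, h]

end Helpers

section Transfer

variable {𝕜 : Type*} [RCLike 𝕜] {X Y : Type*} [NormedAddCommGroup X] [NormedSpace 𝕜 X]
  [NormedAddCommGroup Y] [NormedSpace 𝕜 Y]

lemma exists_phase (c : 𝕜) : ∃ α : 𝕜, ‖α‖ = 1 ∧ α * c = (‖c‖ : 𝕜) := by
  rcases eq_or_ne c 0 with rfl | hc
  · exact ⟨1, by simp, by simp⟩
  · refine ⟨(‖c‖ : 𝕜) / c, ?_, ?_⟩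
    · rw [norm_div, RCLike.norm_ofReal, abs_norm, div_self (norm_ne_zero_iff.2 hc)]
    · rw [div_mul_cancel₀ _ hc]

lemma norm_comp_eq (J : Y →L[𝕜] X) (P : X →L[𝕜] Y) (hJ : ∀ y, ‖J y‖ = ‖y‖)
    (hPJ : ∀ y, P (J y) = y) (hP : ∀ x, ‖P x‖ ≤ ‖x‖) (S : Y →L[𝕜] Y) :
    ‖(J.comp S).comp P‖ = ‖S‖ := by
  refine le_antisymm ?_ ?_
  · refine ContinuousLinearMap.opNorm_le_bound _ (norm_nonneg S) fun x => ?_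
    calc ‖((J.comp S).comp P) x‖ = ‖S (P x)‖ := hJ _
      _ ≤ ‖S‖ * ‖P x‖ := S.le_opNorm _
      _ ≤ ‖S‖ * ‖x‖ := mul_le_mul_of_nonneg_left (hP x) (norm_nonneg S)
  · refine S.opNorm_le_bound (norm_nonneg _) fun y => ?_
    have key : ((J.comp S).comp P) (J y) = J (S y) := by
      simp [ContinuousLinearMap.comp_apply, hPJ y]
    calc ‖S y‖ = ‖J (S y)‖ := (hJ _).symm
      _ = ‖((J.comp S).comp P) (J y)‖ := by rw [key]
      _ ≤ ‖(J.comp S).comp P‖ * ‖J y‖ := ContinuousLinearMap.le_opNorm _ _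
      _ = ‖(J.comp S).comp P‖ * ‖y‖ := by rw [hJ]

lemma radius_le_radius_comp [Nontrivial Y] (J : Y →L[𝕜] X) (P : X →L[𝕜] Y)
    (hJ : ∀ y, ‖J y‖ = ‖y‖) (hPJ : ∀ y, P (J y) = y) (hP : ∀ x, ‖P x‖ ≤ ‖x‖)
    (S : Y →L[𝕜] Y) :
    numRadius 𝕜 Y S ≤ numRadius 𝕜 X ((J.comp S).comp P) := by
  refine numRadius_le fun y g hy hg hgy => ?_
  have hfx : (g.comp P) (J y) = 1 := by
    simp [ContinuousLinearMap.comp_apply, hPJ y, hgy]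
  have hxn : ‖J y‖ = 1 := by rw [hJ, hy]
  have hfn : ‖g.comp P‖ = 1 := by
    refine le_antisymm ?_ ?_
    · refine ContinuousLinearMap.opNorm_le_bound _ zero_le_one fun x => ?_
      calc ‖g (P x)‖ ≤ ‖g‖ * ‖P x‖ := g.le_opNorm _
        _ ≤ 1 * ‖x‖ := by rw [hg]; exact mul_le_mul_of_nonneg_left (hP x) zero_le_one
    · have := (g.comp P).unit_le_opNorm (J y) hxn.le
      rw [hfx] at this
      simpa using this
  have hval : (g.comp P) (((J.comp S).comp P) (J y)) = g (S y) := by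
    simp [ContinuousLinearMap.comp_apply, hPJ]
  calc ‖g (S y)‖ = ‖(g.comp P) (((J.comp S).comp P) (J y))‖ := by rw [hval]
    _ ≤ numRadius 𝕜 X ((J.comp S).comp P) := pair_le_numRadius hxn hfn hfx

/-- the dual inequality for an M-decomposition -/
lemma dual_ineq_of_M (J : Y →L[𝕜] X) (P : X →L[𝕜] Y)
    (hJ : ∀ y, ‖J y‖ = ‖y‖) (hPJ : ∀ y, P (J y) = y)
    (hmax : ∀ x, ‖x‖ = max ‖P x‖ ‖x - J (P x)‖)
    (f : StrongDual 𝕜 X) (hf : ‖f‖ = 1) :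
    ‖f.comp J‖ + ‖f - (f.comp J).comp P‖ ≤ 1 := by
  set g := f.comp J with hgdef
  set h := f - g.comp P with hhdef
  have hhJ : ∀ y, h (J y) = 0 := by
    intro y
    simp [hhdef, hgdef, ContinuousLinearMap.sub_apply, ContinuousLinearMap.comp_apply, hPJ y]
  refine le_of_forall_pos_le_add fun ε hε => ?_
  obtain ⟨y, hy1, hy2⟩ := exists_le_one_lt_apply g (by linarith : ‖g‖ - ε/2 < ‖g‖)
  obtain ⟨x', hx'1, hx'2⟩ := exists_le_one_lt_apply h (by linarith : ‖h‖ - ε/2 < ‖h‖)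
  set z := x' - J (P x') with hzdef
  have hPz : P z = 0 := by simp [hzdef, map_sub, hPJ]
  have hz1 : ‖z‖ ≤ 1 := by
    have := hmax x'
    have h2 : ‖z‖ ≤ ‖x'‖ := by rw [this]; exact le_max_right _ _
    exact h2.trans hx'1
  have hhz : h z = h x' := by simp [hzdef, map_sub, hhJ]
  obtain ⟨α, hα1, hα2⟩ := exists_phase (g y)
  obtain ⟨β, hβ1, hβ2⟩ := exists_phase (h z)
  set t : X := J (α • y) + β • z with htdef
  have hPt : P t = α • y := by simp [htdef, map_add, _root_.map_smul, hPJ, hPz]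
  have htJ : t - J (P t) = β • z := by rw [hPt]; simp [htdef]
  have ht1 : ‖t‖ ≤ 1 := by
    rw [hmax t, htJ, hPt]
    refine max_le ?_ ?_
    · rw [norm_smul α y, hα1, one_mul]; exact hy1
    · rw [norm_smul β z, hβ1, one_mul]; exact hz1
  have hsplit : ∀ v : X, f v = g (P v) + h v := by
    intro v
    simp [hhdef, ContinuousLinearMap.sub_apply, ContinuousLinearMap.comp_apply]
  have hft : f t = ((‖g y‖ + ‖h z‖ : ℝ) : 𝕜) := by
    have e1 : f t = f (J (α • y)) + f (β • z) := by rw [htdef, map_add]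
    have e2 : f (J (α • y)) = g (α • y) := by rw [hgdef]; rfl
    have e3 : f (β • z) = h (β • z) := by
      rw [hsplit (β • z), _root_.map_smul, hPz, smul_zero, map_zero, zero_add]
    rw [e1, e2, e3, _root_.map_smul, _root_.map_smul, smul_eq_mul, smul_eq_mul, hα2, hβ2, hhz]
    push_cast
    ring
  have hnorm : ‖f t‖ = ‖g y‖ + ‖h z‖ := by
    rw [hft, RCLike.norm_ofReal, abs_of_nonneg (by positivity)]
  have hb : ‖f t‖ ≤ 1 := by
    calc ‖f t‖ ≤ ‖f‖ * ‖t‖ := f.le_opNorm t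
      _ ≤ 1 * 1 := by rw [hf]; exact mul_le_mul_of_nonneg_left ht1 zero_le_one
      _ = 1 := one_mul 1
  have h1b : ‖g y‖ + ‖h z‖ ≤ 1 := hnorm ▸ hb
  have hhz' : ‖h z‖ = ‖h x'‖ := by rw [hhz]
  linarith

lemma numIndex_le_of_M [Nontrivial Y] (J : Y →L[𝕜] X) (P : X →L[𝕜] Y)
    (hJ : ∀ y, ‖J y‖ = ‖y‖) (hPJ : ∀ y, P (J y) = y)
    (hmax : ∀ x, ‖x‖ = max ‖P x‖ ‖x - J (P x)‖) :
    numIndex 𝕜 X ≤ numIndex 𝕜 Y := by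
  have hP : ∀ x : X, ‖P x‖ ≤ ‖x‖ := fun x => by rw [hmax x]; exact le_max_left _ _
  haveI : Nontrivial X := by
    obtain ⟨y, hy⟩ := exists_ne (0 : Y)
    refine ⟨J y, 0, fun hcon => hy ?_⟩
    have := hJ y
    rw [hcon, norm_zero] at this
    exact norm_eq_zero.1 this.symm
  refine csInf_le_csInf index_set_bddBelow
    ⟨numRadius 𝕜 Y (ContinuousLinearMap.id 𝕜 Y),
      ContinuousLinearMap.id 𝕜 Y, ContinuousLinearMap.norm_id, rfl⟩ ?_
  rintro r ⟨S, hS, rfl⟩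
  refine ⟨(J.comp S).comp P, by rw [norm_comp_eq J P hJ hPJ hP, hS], ?_⟩
  refine le_antisymm (radius_le_radius_comp J P hJ hPJ hP S) ?_
  refine numRadius_le fun x f hx hf hfx => ?_
  set g := f.comp J with hgdef
  set h := f - g.comp P with hhdef
  have hhJ : ∀ y, h (J y) = 0 := by
    intro y
    simp [hhdef, hgdef, ContinuousLinearMap.sub_apply, ContinuousLinearMap.comp_apply, hPJ y]
  have hsplit : ∀ v : X, f v = g (P v) + h v := by
    intro v
    simp [hhdef, ContinuousLinearMap.sub_apply, ContinuousLinearMap.comp_apply]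
  have hval : f (((J.comp S).comp P) x) = g (S (P x)) := by
    have e : ((J.comp S).comp P) x = J (S (P x)) := rfl
    rw [e, hsplit (J (S (P x))), hPJ, hhJ, add_zero]
  rcases eq_or_ne g 0 with hg0 | hg0
  · rw [hval, hg0]
    simpa using numRadius_nonneg S
  · have hdual := dual_ineq_of_M J P hJ hPJ hmax f hf
    rw [← hgdef, ← hhdef] at hdual
    have h1 : RCLike.re (g (P x)) + RCLike.re (h x) = 1 := by
      have e : g (P x) + h x = 1 := by rw [← hsplit x, hfx]
      have := congrArg (RCLike.re (K := 𝕜)) e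
      rw [map_add] at this
      simpa using this
    have r1 : RCLike.re (g (P x)) ≤ ‖g‖ * ‖P x‖ :=
      (RCLike.re_le_norm _).trans (g.le_opNorm _)
    have hPx1 : ‖P x‖ ≤ 1 := hx ▸ hP x
    have r1' : ‖g‖ * ‖P x‖ ≤ ‖g‖ := mul_le_of_le_one_right (norm_nonneg g) hPx1
    have r2 : RCLike.re (h x) ≤ ‖h‖ := by
      have e : h x = h (x - J (P x)) := by rw [map_sub, hhJ, sub_zero]
      have hxJ : ‖x - J (P x)‖ ≤ 1 := by
        rw [← hx, hmax x]; exact le_max_right _ _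
      have hb : ‖h x‖ ≤ ‖h‖ := by
        rw [e]
        calc ‖h (x - J (P x))‖ ≤ ‖h‖ * ‖x - J (P x)‖ := h.le_opNorm _
          _ ≤ ‖h‖ := mul_le_of_le_one_right (norm_nonneg h) hxJ
      exact (RCLike.re_le_norm _).trans hb
    have hgpos : 0 < ‖g‖ := norm_pos_iff.2 hg0
    have eA : RCLike.re (g (P x)) = ‖g‖ := by linarith
    have eB : ‖g‖ * ‖P x‖ = ‖g‖ := by linarith
    have hPx : ‖P x‖ = 1 := by
      have := mul_left_cancel₀ hgpos.ne' (eB.trans (mul_one ‖g‖).symm)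
      exact this
    have hgle : ‖g (P x)‖ ≤ ‖g‖ := by
      have := g.le_opNorm (P x)
      rwa [hPx, mul_one] at this
    have gval : g (P x) = ((‖g‖ : ℝ) : 𝕜) := eq_ofReal_of_re_eq eA hgle
    have hgk : ((‖g‖ : ℝ) : 𝕜) ≠ 0 := by simpa using hgpos.ne'
    set g₀ : StrongDual 𝕜 Y := ((‖g‖ : ℝ) : 𝕜)⁻¹ • g with hg₀def
    have hg₀n : ‖g₀‖ = 1 := by
      rw [hg₀def, norm_smul _ g, norm_inv, RCLike.norm_ofReal, abs_norm]
      field_simp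
    have hg₀y : g₀ (P x) = 1 := by
      rw [hg₀def]
      simp only [ContinuousLinearMap.smul_apply, gval, smul_eq_mul]
      exact inv_mul_cancel₀ hgk
    have hpair := pair_le_numRadius (T := S) hPx hg₀n hg₀y
    have hrel : g (S (P x)) = ((‖g‖ : ℝ) : 𝕜) * g₀ (S (P x)) := by
      rw [hg₀def]
      simp only [ContinuousLinearMap.smul_apply, smul_eq_mul]
      field_simp
    rw [hval, hrel, norm_mul, RCLike.norm_ofReal, abs_norm]
    have hgone : ‖g‖ ≤ 1 := by linarith [norm_nonneg h]
    calc ‖g‖ * ‖g₀ (S (P x))‖ ≤ 1 * numRadius 𝕜 Y S :=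
          mul_le_mul hgone hpair (norm_nonneg _) zero_le_one
      _ = numRadius 𝕜 Y S := one_mul _
lemma numIndex_le_of_L [Nontrivial Y] (J : Y →L[𝕜] X) (P : X →L[𝕜] Y)
    (hJ : ∀ y, ‖J y‖ = ‖y‖) (hPJ : ∀ y, P (J y) = y)
    (hsum : ∀ x, ‖x‖ = ‖P x‖ + ‖x - J (P x)‖) :
    numIndex 𝕜 X ≤ numIndex 𝕜 Y := by
  have hP : ∀ x : X, ‖P x‖ ≤ ‖x‖ := fun x => by
    rw [hsum x]; linarith [norm_nonneg (x - J (P x))]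
  have hC : ∀ x : X, ‖x - J (P x)‖ ≤ ‖x‖ := fun x => by
    rw [hsum x]; linarith [norm_nonneg (P x)]
  haveI : Nontrivial X := by
    obtain ⟨y, hy⟩ := exists_ne (0 : Y)
    refine ⟨J y, 0, fun hcon => hy ?_⟩
    have := hJ y
    rw [hcon, norm_zero] at this
    exact norm_eq_zero.1 this.symm
  refine csInf_le_csInf index_set_bddBelow
    ⟨numRadius 𝕜 Y (ContinuousLinearMap.id 𝕜 Y),
      ContinuousLinearMap.id 𝕜 Y, ContinuousLinearMap.norm_id, rfl⟩ ?_
  rintro r ⟨S, hS, rfl⟩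
  refine ⟨(J.comp S).comp P, by rw [norm_comp_eq J P hJ hPJ hP, hS], ?_⟩
  refine le_antisymm (radius_le_radius_comp J P hJ hPJ hP S) ?_
  refine numRadius_le fun x f hx hf hfx => ?_
  set g := f.comp J with hgdef
  set h := f - g.comp P with hhdef
  have hhJ : ∀ y, h (J y) = 0 := by
    intro y
    simp [hhdef, hgdef, ContinuousLinearMap.sub_apply, ContinuousLinearMap.comp_apply, hPJ y]
  have hsplit : ∀ v : X, f v = g (P v) + h v := by
    intro v
    simp [hhdef, ContinuousLinearMap.sub_apply, ContinuousLinearMap.comp_apply]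
  have hval : f (((J.comp S).comp P) x) = g (S (P x)) := by
    have e : ((J.comp S).comp P) x = J (S (P x)) := rfl
    rw [e, hsplit (J (S (P x))), hPJ, hhJ, add_zero]
  have hgn : ‖g‖ ≤ 1 := by
    refine ContinuousLinearMap.opNorm_le_bound _ zero_le_one fun y => ?_
    calc ‖g y‖ = ‖f (J y)‖ := rfl
      _ ≤ ‖f‖ * ‖J y‖ := f.le_opNorm _
      _ = 1 * ‖y‖ := by rw [hf, hJ]
  rcases eq_or_ne (P x) 0 with hp0 | hp0
  · rw [hval, hp0, map_zero, map_zero, norm_zero]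
    exact numRadius_nonneg S
  · have h1 : RCLike.re (g (P x)) + RCLike.re (h x) = 1 := by
      have e : g (P x) + h x = 1 := by rw [← hsplit x, hfx]
      have := congrArg (RCLike.re (K := 𝕜)) e
      rw [map_add] at this
      simpa using this
    have r1 : RCLike.re (g (P x)) ≤ ‖P x‖ := by
      refine (RCLike.re_le_norm _).trans ?_
      calc ‖g (P x)‖ ≤ ‖g‖ * ‖P x‖ := g.le_opNorm _
        _ ≤ 1 * ‖P x‖ := mul_le_mul_of_nonneg_right hgn (norm_nonneg _)
        _ = ‖P x‖ := one_mul _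
    have r2 : RCLike.re (h x) ≤ ‖x - J (P x)‖ := by
      refine (RCLike.re_le_norm _).trans ?_
      have e : h x = h (x - J (P x)) := by rw [map_sub, hhJ, sub_zero]
      have hhn : ∀ v : X, ‖h v‖ ≤ ‖v - J (P v)‖ := by
        intro v
        have e2 : h v = f (v - J (P v)) := by
          rw [map_sub]
          simp [hhdef, hgdef, ContinuousLinearMap.sub_apply, ContinuousLinearMap.comp_apply]
        calc ‖h v‖ = ‖f (v - J (P v))‖ := by rw [e2]
          _ ≤ ‖f‖ * ‖v - J (P v)‖ := f.le_opNorm _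
          _ = ‖v - J (P v)‖ := by rw [hf, one_mul]
      have e3 : (x - J (P x)) - J (P (x - J (P x))) = x - J (P x) := by
        rw [map_sub, hPJ, sub_self, map_zero, sub_zero]
      calc ‖h x‖ = ‖h (x - J (P x))‖ := by rw [e]
        _ ≤ ‖(x - J (P x)) - J (P (x - J (P x)))‖ := hhn _
        _ = ‖x - J (P x)‖ := by rw [e3]
    have hsx : ‖P x‖ + ‖x - J (P x)‖ = 1 := by rw [← hsum x, hx]
    have eA : RCLike.re (g (P x)) = ‖P x‖ := by linarith
    have hgle : ‖g (P x)‖ ≤ ‖P x‖ := by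
      calc ‖g (P x)‖ ≤ ‖g‖ * ‖P x‖ := g.le_opNorm _
        _ ≤ 1 * ‖P x‖ := mul_le_mul_of_nonneg_right hgn (norm_nonneg _)
        _ = ‖P x‖ := one_mul _
    have gval : g (P x) = ((‖P x‖ : ℝ) : 𝕜) := eq_ofReal_of_re_eq eA hgle
    have htpos : 0 < ‖P x‖ := norm_pos_iff.2 hp0
    have htk : ((‖P x‖ : ℝ) : 𝕜) ≠ 0 := by simpa using htpos.ne'
    set y₀ : Y := ((‖P x‖ : ℝ) : 𝕜)⁻¹ • P x with hy₀def
    have hy₀n : ‖y₀‖ = 1 := by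
      rw [hy₀def, norm_smul _ (P x), norm_inv, RCLike.norm_ofReal, abs_norm]
      field_simp
    have hy₀g : g y₀ = 1 := by
      rw [hy₀def, _root_.map_smul, gval, smul_eq_mul]
      exact inv_mul_cancel₀ htk
    have hgn1 : ‖g‖ = 1 := by
      refine le_antisymm hgn ?_
      have := g.unit_le_opNorm y₀ hy₀n.le
      rw [hy₀g] at this
      simpa using this
    have hpair := pair_le_numRadius (T := S) hy₀n hgn1 hy₀g
    have hPxy : P x = ((‖P x‖ : ℝ) : 𝕜) • y₀ := by
      rw [hy₀def, smul_inv_smul₀ htk]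
    have hrel : g (S (P x)) = ((‖P x‖ : ℝ) : 𝕜) * g (S y₀) := by
      rw [hPxy, _root_.map_smul, _root_.map_smul, smul_eq_mul]
      rw [smul_inv_smul₀ htk]
    rw [hval, hrel, norm_mul, RCLike.norm_ofReal, abs_norm]
    have ht1 : ‖P x‖ ≤ 1 := hx ▸ hP x
    calc ‖P x‖ * ‖g (S y₀)‖ ≤ 1 * numRadius 𝕜 Y S :=
          mul_le_mul ht1 hpair (norm_nonneg _) zero_le_one
      _ = numRadius 𝕜 Y S := one_mul _
lemma le_of_forall_one_sub {c v : ℝ} (hc : 0 ≤ c) (hv : 0 ≤ v)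
    (h : ∀ ε : ℝ, 0 < ε → ε < 1 → (1 - ε) * c ≤ v) : c ≤ v := by
  by_contra hlt
  push_neg at hlt
  have hcpos : 0 < c := lt_of_le_of_lt hv hlt
  have hd : 0 < (c - v) / (2 * c) := div_pos (by linarith) (by linarith)
  have hd1 : (c - v) / (2 * c) < 1 := by
    rw [div_lt_one (by positivity)]
    linarith
  have := h _ hd hd1
  have e : (1 - (c - v) / (2 * c)) * c = c - (c - v) / 2 := by
    field_simp
  rw [e] at this
  linarith

lemma exists_unit_affine_ge [Nontrivial Y] (A : Y →L[𝕜] Y) (b : Y) {y : Y} (hy : ‖y‖ ≤ 1) :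
    ∃ u : Y, ‖u‖ = 1 ∧ ‖A y + b‖ ≤ ‖A u + b‖ := by
  rcases eq_or_ne y 0 with rfl | hy0
  · obtain ⟨w, hw⟩ := exists_ne (0 : Y)
    set u₀ : Y := ((‖w‖ : ℝ) : 𝕜)⁻¹ • w with hu₀def
    have hu₀ : ‖u₀‖ = 1 := by
      rw [hu₀def, norm_smul _ w, norm_inv, RCLike.norm_ofReal, abs_norm]
      field_simp [norm_ne_zero_iff.2 hw]
    have hmid : (A u₀ + b) + (A (-u₀) + b) = b + b := by
      rw [map_neg]; abel
    have h2b : ‖b + b‖ ≤ ‖A u₀ + b‖ + ‖A (-u₀) + b‖ := hmid ▸ norm_add_le _ _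
    have hbb : ‖b + b‖ = 2 * ‖b‖ := by
      rw [← two_smul 𝕜 b, norm_smul _ b]
      norm_num
    rcases le_total ‖A u₀ + b‖ ‖A (-u₀) + b‖ with hle | hle
    · refine ⟨-u₀, by rw [norm_neg, hu₀], ?_⟩
      rw [map_zero, zero_add]
      linarith
    · refine ⟨u₀, hu₀, ?_⟩
      rw [map_zero, zero_add]
      linarith
  · set t : ℝ := ‖y‖ with htdef
    have htpos : 0 < t := norm_pos_iff.2 hy0
    have htk : ((t : ℝ) : 𝕜) ≠ 0 := by simpa using htpos.ne'
    set u : Y := ((t : ℝ) : 𝕜)⁻¹ • y with hudef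
    have hu : ‖u‖ = 1 := by
      rw [hudef, norm_smul _ y, norm_inv, RCLike.norm_ofReal, abs_norm]
      field_simp
    have hyu : y = ((t : ℝ) : 𝕜) • u := by rw [hudef, smul_inv_smul₀ htk]
    set s₁ : ℝ := (1 + t) / 2 with hs₁def
    set s₂ : ℝ := (1 - t) / 2 with hs₂def
    have hkey : A y + b = ((s₁ : ℝ) : 𝕜) • (A u + b) + ((s₂ : ℝ) : 𝕜) • (A (-u) + b) := by
      rw [hyu, _root_.map_smul, map_neg]
      rw [smul_add, smul_add, smul_neg]
      have hc : ((s₁ : ℝ) : 𝕜) - ((s₂ : ℝ) : 𝕜) = ((t : ℝ) : 𝕜) := by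
        push_cast [hs₁def, hs₂def]
        ring
      have hc2 : ((s₁ : ℝ) : 𝕜) + ((s₂ : ℝ) : 𝕜) = 1 := by
        push_cast [hs₁def, hs₂def]
        ring
      calc ((t : ℝ) : 𝕜) • A u + b
          = (((s₁ : ℝ) : 𝕜) - ((s₂ : ℝ) : 𝕜)) • A u + (((s₁ : ℝ) : 𝕜) + ((s₂ : ℝ) : 𝕜)) • b := by
            rw [hc, hc2, one_smul]
        _ = ((s₁ : ℝ) : 𝕜) • A u + ((s₁ : ℝ) : 𝕜) • b + (-(((s₂ : ℝ) : 𝕜) • A u) + ((s₂ : ℝ) : 𝕜) • b) := by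
            rw [sub_smul, add_smul]; abel
    have hs₁n : 0 ≤ s₁ := by rw [hs₁def]; linarith
    have hs₂n : 0 ≤ s₂ := by rw [hs₂def]; have : t ≤ 1 := htdef ▸ hy; linarith
    have hbound : ‖A y + b‖ ≤ s₁ * ‖A u + b‖ + s₂ * ‖A (-u) + b‖ := by
      rw [hkey]
      refine (norm_add_le _ _).trans ?_
      rw [norm_smul _ (A u + b), norm_smul _ (A (-u) + b), RCLike.norm_ofReal,
        RCLike.norm_ofReal, abs_of_nonneg hs₁n, abs_of_nonneg hs₂n]
    have hsum : s₁ + s₂ = 1 := by rw [hs₁def, hs₂def]; ring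
    rcases le_total ‖A u + b‖ ‖A (-u) + b‖ with hle | hle
    · refine ⟨-u, by rw [norm_neg, hu], ?_⟩
      calc ‖A y + b‖ ≤ s₁ * ‖A u + b‖ + s₂ * ‖A (-u) + b‖ := hbound
        _ ≤ s₁ * ‖A (-u) + b‖ + s₂ * ‖A (-u) + b‖ := by
            exact add_le_add_left (mul_le_mul_of_nonneg_left hle hs₁n) _
        _ = ‖A (-u) + b‖ := by rw [← add_mul, hsum, one_mul]
    · refine ⟨u, hu, ?_⟩
      calc ‖A y + b‖ ≤ s₁ * ‖A u + b‖ + s₂ * ‖A (-u) + b‖ := hbound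
        _ ≤ s₁ * ‖A u + b‖ + s₂ * ‖A u + b‖ := by
            exact add_le_add_right (mul_le_mul_of_nonneg_left hle hs₂n) _
        _ = ‖A u + b‖ := by rw [← add_mul, hsum, one_mul]

end Transfer
section HardDirection

variable {𝕜 : Type*} [RCLike 𝕜] {ι : Type*} [Nonempty ι] {E : ι → Type*}
  [∀ i, NormedAddCommGroup (E i)] [∀ i, NormedSpace 𝕜 (E i)] [∀ i, Nontrivial (E i)]
  {X : Type*} [NormedAddCommGroup X] [NormedSpace 𝕜 X]

lemma iInf_le_numIndex_of_M (J : ∀ i, E i →L[𝕜] X) (P : ∀ i, X →L[𝕜] E i)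
    (hJ : ∀ i y, ‖J i y‖ = ‖y‖) (hPJ : ∀ i y, P i (J i y) = y)
    (hmax : ∀ i x, ‖x‖ = max ‖P i x‖ ‖x - J i (P i x)‖)
    (hcoord : ∀ (x : X) (c : ℝ), c < ‖x‖ → ∃ i, c < ‖P i x‖) :
    (⨅ i, numIndex 𝕜 (E i)) ≤ numIndex 𝕜 X := by
  haveI : Nontrivial X := by
    obtain ⟨y, hy⟩ := exists_ne (0 : E (Classical.arbitrary ι))
    refine ⟨J _ y, 0, fun hcon => hy ?_⟩
    have := hJ _ y
    rw [hcon, norm_zero] at this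
    exact norm_eq_zero.1 this.symm
  have hbdd : BddBelow (Set.range fun i => numIndex 𝕜 (E i)) := by
    refine ⟨0, ?_⟩
    rintro _ ⟨i, rfl⟩
    exact numIndex_nonneg 𝕜 (E i)
  have hc0 : 0 ≤ ⨅ i, numIndex 𝕜 (E i) :=
    le_ciInf fun i => numIndex_nonneg 𝕜 (E i)
  refine le_csInf ⟨numRadius 𝕜 X (ContinuousLinearMap.id 𝕜 X),
    ContinuousLinearMap.id 𝕜 X, ContinuousLinearMap.norm_id, rfl⟩ ?_
  rintro r ⟨T, hT, rfl⟩
  refine le_of_forall_one_sub hc0 (numRadius_nonneg T) fun ε hε hε1 => ?_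
  obtain ⟨x, hx1, hx2⟩ := exists_le_one_lt_apply T
    (show 1 - ε/2 < ‖T‖ by rw [hT]; linarith)
  obtain ⟨κ, hκ⟩ := hcoord (T x) (1 - ε) (by linarith)
  set A : E κ →L[𝕜] E κ := ((P κ).comp T).comp (J κ) with hAdef
  set z : X := x - J κ (P κ x) with hzdef
  set b : E κ := P κ (T z) with hbdef
  have hxz : J κ (P κ x) + z = x := by rw [hzdef]; abel
  have hAb : A (P κ x) + b = P κ (T x) := by
    calc A (P κ x) + b = P κ (T (J κ (P κ x))) + P κ (T z) := rfl
      _ = P κ (T (J κ (P κ x)) + T z) := (map_add (P κ) _ _).symm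
      _ = P κ (T (J κ (P κ x) + z)) := by rw [← map_add T]
      _ = P κ (T x) := by rw [hxz]
  have hPκx : ‖P κ x‖ ≤ 1 := by
    refine le_trans ?_ hx1
    rw [hmax κ x]
    exact le_max_left _ _
  have hzn : ‖z‖ ≤ 1 := by
    refine le_trans ?_ hx1
    rw [hmax κ x]
    exact le_max_right _ _
  have hPz : P κ z = 0 := by rw [hzdef, map_sub, hPJ, sub_self]
  obtain ⟨u, hu1, hu2⟩ := exists_unit_affine_ge A b hPκx
  have hub : 1 - ε < ‖A u + b‖ := lt_of_lt_of_le (hAb ▸ hκ) hu2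
  obtain ⟨g₀, hg₀n, hg₀u⟩ := exists_dual_vector 𝕜 u (by rw [← norm_ne_zero_iff, hu1]; norm_num)
  set S : E κ →L[𝕜] E κ := A + g₀.smulRight b with hSdef
  have hSu : S u = A u + b := by
    rw [hSdef]
    simp only [ContinuousLinearMap.add_apply, ContinuousLinearMap.smulRight_apply]
    rw [hg₀u, hu1, RCLike.ofReal_one, one_smul]
  have hSn : 1 - ε < ‖S‖ := by
    refine lt_of_lt_of_le (hSu ▸ hub) ?_
    have := S.le_opNorm u
    rw [hu1, mul_one] at this
    exact this
  have hPn : ∀ v : X, ‖P κ v‖ ≤ ‖v‖ := fun v => by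
    rw [hmax κ v]; exact le_max_left _ _
  have htrans : ∀ (y : E κ) (g : StrongDual 𝕜 (E κ)), ‖y‖ = 1 → ‖g‖ = 1 → g y = 1 →
      ‖g (S y)‖ ≤ numRadius 𝕜 X T := by
    intro y g hy hg hgy
    obtain ⟨β, hβ1, hβ2⟩ := exists_align (g (A y)) (g b)
    have hβ0 : β ≠ 0 := by
      intro h0
      rw [h0, norm_zero] at hβ1
      norm_num at hβ1
    set α : 𝕜 := β⁻¹ with hαdef
    have hα1 : ‖α‖ = 1 := by rw [hαdef, norm_inv, hβ1]; norm_num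
    have hα0 : α ≠ 0 := inv_ne_zero hβ0
    set xh : X := J κ (α • y) + z with hxhdef
    have hPxh : P κ xh = α • y := by
      rw [hxhdef, map_add, hPJ, hPz, add_zero]
    have hxhz : xh - J κ (P κ xh) = z := by
      rw [hPxh, hxhdef]; abel
    have hxhn : ‖xh‖ = 1 := by
      rw [hmax κ xh, hxhz, hPxh, norm_smul α y, hα1, hy, mul_one]
      exact max_eq_left hzn
    set F : StrongDual 𝕜 X := α⁻¹ • (g.comp (P κ)) with hFdef
    have hFxh : F xh = 1 := by
      rw [hFdef]
      simp only [ContinuousLinearMap.smul_apply, ContinuousLinearMap.comp_apply, smul_eq_mul]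
      rw [hPxh, _root_.map_smul, smul_eq_mul, hgy, mul_one, inv_mul_cancel₀ hα0]
    have hFn : ‖F‖ = 1 := by
      refine le_antisymm ?_ ?_
      · rw [hFdef, norm_smul α⁻¹ (g.comp (P κ)), norm_inv, hα1, inv_one, one_mul]
        refine ContinuousLinearMap.opNorm_le_bound _ zero_le_one fun v => ?_
        calc ‖g (P κ v)‖ ≤ ‖g‖ * ‖P κ v‖ := g.le_opNorm _
          _ ≤ 1 * ‖v‖ := by rw [hg]; exact mul_le_mul_of_nonneg_left (hPn v) zero_le_one
      · have := F.unit_le_opNorm xh hxhn.le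
        rw [hFxh] at this
        simpa using this
    have hFT : F (T xh) = g (A y) + β * g b := by
      have e1 : T xh = T (J κ (α • y)) + T z := by rw [hxhdef, map_add]
      rw [hFdef]
      simp only [ContinuousLinearMap.smul_apply, ContinuousLinearMap.comp_apply, smul_eq_mul]
      rw [e1, map_add (P κ), map_add g]
      have e2 : g (P κ (T (J κ (α • y)))) = α * g (A y) := by
        have : P κ (T (J κ (α • y))) = A (α • y) := rfl
        rw [this, _root_.map_smul, _root_.map_smul, smul_eq_mul]
      rw [e2]
      have e3 : g (P κ (T z)) = g b := rfl
      rw [e3, mul_add, ← mul_assoc, inv_mul_cancel₀ hα0, one_mul, hαdef, inv_inv]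
    have hpair := pair_le_numRadius (T := T) hxhn hFn hFxh
    rw [hFT, hβ2] at hpair
    have hSy : g (S y) = g (A y) + g₀ y * g b := by
      rw [hSdef]
      simp only [ContinuousLinearMap.add_apply, ContinuousLinearMap.smulRight_apply]
      rw [map_add, _root_.map_smul, smul_eq_mul]
    have hg₀y : ‖g₀ y‖ ≤ 1 := by
      have := g₀.le_opNorm y
      rw [hg₀n, hy, one_mul] at this
      exact this
    calc ‖g (S y)‖ ≤ ‖g (A y)‖ + ‖g₀ y * g b‖ := hSy ▸ norm_add_le _ _
      _ ≤ ‖g (A y)‖ + 1 * ‖g b‖ := by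
          rw [norm_mul]
          exact add_le_add_right (mul_le_mul_of_nonneg_right hg₀y (norm_nonneg _)) _
      _ = ‖g (A y)‖ + ‖g b‖ := by rw [one_mul]
      _ ≤ numRadius 𝕜 X T := hpair
  have hrad : numRadius 𝕜 (E κ) S ≤ numRadius 𝕜 X T := numRadius_le htrans
  calc (1 - ε) * ⨅ i, numIndex 𝕜 (E i) ≤ (1 - ε) * numIndex 𝕜 (E κ) :=
        mul_le_mul_of_nonneg_left (ciInf_le hbdd κ) (by linarith)
    _ ≤ ‖S‖ * numIndex 𝕜 (E κ) :=
        mul_le_mul_of_nonneg_right hSn.le (numIndex_nonneg 𝕜 (E κ))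
    _ = numIndex 𝕜 (E κ) * ‖S‖ := mul_comm _ _
    _ ≤ numRadius 𝕜 (E κ) S := index_mul_norm_le_numRadius S
    _ ≤ numRadius 𝕜 X T := hrad

lemma iInf_le_numIndex_of_L (J : ∀ i, E i →L[𝕜] X) (P : ∀ i, X →L[𝕜] E i)
    (hJ : ∀ i y, ‖J i y‖ = ‖y‖) (hPJ : ∀ i y, P i (J i y) = y)
    (hsum : ∀ i x, ‖x‖ = ‖P i x‖ + ‖x - J i (P i x)‖)
    (hnorm : ∀ (T : X →L[𝕜] X) (c : ℝ), c < ‖T‖ → ∃ i, c < ‖T.comp (J i)‖) :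
    (⨅ i, numIndex 𝕜 (E i)) ≤ numIndex 𝕜 X := by
  haveI : Nontrivial X := by
    obtain ⟨y, hy⟩ := exists_ne (0 : E (Classical.arbitrary ι))
    refine ⟨J _ y, 0, fun hcon => hy ?_⟩
    have := hJ _ y
    rw [hcon, norm_zero] at this
    exact norm_eq_zero.1 this.symm
  have hbdd : BddBelow (Set.range fun i => numIndex 𝕜 (E i)) := by
    refine ⟨0, ?_⟩
    rintro _ ⟨i, rfl⟩
    exact numIndex_nonneg 𝕜 (E i)
  have hc0 : 0 ≤ ⨅ i, numIndex 𝕜 (E i) :=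
    le_ciInf fun i => numIndex_nonneg 𝕜 (E i)
  refine le_csInf ⟨numRadius 𝕜 X (ContinuousLinearMap.id 𝕜 X),
    ContinuousLinearMap.id 𝕜 X, ContinuousLinearMap.norm_id, rfl⟩ ?_
  rintro r ⟨T, hT, rfl⟩
  classical
  refine le_of_forall_one_sub hc0 (numRadius_nonneg T) fun ε hε hε1 => ?_
  obtain ⟨κ, hκ⟩ := hnorm T (1 - ε/2) (by rw [hT]; linarith)
  obtain ⟨u, hu1, hu2⟩ := exists_le_one_lt_apply (T.comp (J κ))
    (show 1 - ε < ‖T.comp (J κ)‖ by linarith)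
  set A : E κ →L[𝕜] E κ := ((P κ).comp T).comp (J κ) with hAdef
  set v : X := T (J κ u) with hvdef
  set r0 : X := v - J κ (P κ v) with hr0def
  have hPv : P κ v = A u := rfl
  have hvsplit : v = J κ (A u) + r0 := by rw [hr0def, hPv]; abel
  have hvn : ‖v‖ = ‖A u‖ + ‖r0‖ := by
    have := hsum κ v
    rwa [← hr0def, hPv] at this
  have hPr0 : P κ r0 = 0 := by rw [hr0def, map_sub, hPJ, sub_self]
  obtain ⟨f₀, hf₀n, hf₀r⟩ : ∃ f₀ : StrongDual 𝕜 X, ‖f₀‖ ≤ 1 ∧ f₀ r0 = ((‖r0‖ : ℝ) : 𝕜) := by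
    rcases eq_or_ne r0 0 with h0 | h0
    · exact ⟨0, by simp, by simp [h0]⟩
    · obtain ⟨f₀, h1, h2⟩ := exists_dual_vector 𝕜 r0 (norm_ne_zero_iff.2 h0)
      exact ⟨f₀, h1.le, h2⟩
  set h₀ : StrongDual 𝕜 X := f₀ - f₀.comp ((J κ).comp (P κ)) with hh₀def
  have hh₀v : ∀ w : X, h₀ w = f₀ (w - J κ (P κ w)) := by
    intro w
    rw [hh₀def, map_sub]
    simp [ContinuousLinearMap.sub_apply, ContinuousLinearMap.comp_apply]
  have hh₀J : ∀ y : E κ, h₀ (J κ y) = 0 := by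
    intro y
    rw [hh₀v, hPJ, sub_self, map_zero]
  have hh₀r0 : h₀ r0 = ((‖r0‖ : ℝ) : 𝕜) := by
    rw [hh₀v, hPr0, map_zero, sub_zero, hf₀r]
  have hh₀n : ∀ w : X, ‖h₀ w‖ ≤ ‖w - J κ (P κ w)‖ := by
    intro w
    rw [hh₀v]
    calc ‖f₀ (w - J κ (P κ w))‖ ≤ ‖f₀‖ * ‖w - J κ (P κ w)‖ := f₀.le_opNorm _
      _ ≤ 1 * ‖w - J κ (P κ w)‖ := mul_le_mul_of_nonneg_right hf₀n (norm_nonneg _)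
      _ = ‖w - J κ (P κ w)‖ := one_mul _
  set φ : StrongDual 𝕜 (E κ) := h₀.comp (T.comp (J κ)) with hφdef
  have hφu : φ u = ((‖r0‖ : ℝ) : 𝕜) := by
    have e1 : φ u = h₀ v := rfl
    rw [e1, hvsplit, map_add, hh₀J, zero_add, hh₀r0]
  obtain ⟨w₀x, hw₀x⟩ := exists_ne (0 : E κ)
  set w₀ : E κ := ((‖w₀x‖ : ℝ) : 𝕜)⁻¹ • w₀x with hw₀def
  have hw₀n : ‖w₀‖ = 1 := by
    rw [hw₀def, norm_smul _ w₀x, norm_inv, RCLike.norm_ofReal, abs_norm]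
    field_simp [norm_ne_zero_iff.2 hw₀x]
  set w : E κ := if A u = 0 then w₀ else ((‖A u‖ : ℝ) : 𝕜)⁻¹ • A u with hwdef
  have hwn : ‖w‖ ≤ 1 := by
    rw [hwdef]
    split_ifs with h0
    · rw [hw₀n]
    · rw [norm_smul _ (A u), norm_inv, RCLike.norm_ofReal, abs_norm]
      rw [inv_mul_cancel₀ (norm_ne_zero_iff.2 h0)]
  set S : E κ →L[𝕜] E κ := A + φ.smulRight w with hSdef
  have hSu : S u = A u + ((‖r0‖ : ℝ) : 𝕜) • w := by
    rw [hSdef]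
    simp only [ContinuousLinearMap.add_apply, ContinuousLinearMap.smulRight_apply]
    rw [hφu]
  have hSun : ‖S u‖ = ‖A u‖ + ‖r0‖ := by
    rcases eq_or_ne (A u) 0 with h0 | h0
    · rw [hSu, h0, zero_add, norm_zero, zero_add]
      have hww : w = w₀ := by rw [hwdef, if_pos h0]
      rw [hww, norm_smul _ w₀, hw₀n, mul_one, RCLike.norm_ofReal, abs_norm]
    · have hww : w = ((‖A u‖ : ℝ) : 𝕜)⁻¹ • A u := by rw [hwdef, if_neg h0]
      have hAun : ((‖A u‖ : ℝ) : 𝕜) ≠ 0 := by simpa using norm_ne_zero_iff.2 h0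
      have e : S u = (((1 + ‖r0‖ / ‖A u‖ : ℝ)) : 𝕜) • A u := by
        rw [hSu, hww, smul_smul]
        have : ((1 + ‖r0‖ / ‖A u‖ : ℝ) : 𝕜) = 1 + ((‖r0‖ : ℝ) : 𝕜) * ((‖A u‖ : ℝ) : 𝕜)⁻¹ := by
          push_cast
          rw [div_eq_mul_inv]
        rw [this, add_smul, one_smul]
      rw [e, norm_smul _ (A u), RCLike.norm_ofReal,
        abs_of_nonneg (by positivity : (0:ℝ) ≤ 1 + ‖r0‖ / ‖A u‖)]
      rw [add_mul, one_mul, div_mul_cancel₀ _ (norm_ne_zero_iff.2 h0)]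
  have hvu : 1 - ε < ‖v‖ := hu2
  have hSn : 1 - ε < ‖S‖ := by
    have h1 : 1 - ε < ‖S u‖ := by rw [hSun, ← hvn]; exact hvu
    refine lt_of_lt_of_le h1 ?_
    calc ‖S u‖ ≤ ‖S‖ * ‖u‖ := S.le_opNorm u
      _ ≤ ‖S‖ * 1 := mul_le_mul_of_nonneg_left hu1 (norm_nonneg S)
      _ = ‖S‖ := mul_one _
  have htrans : ∀ (y : E κ) (g : StrongDual 𝕜 (E κ)), ‖y‖ = 1 → ‖g‖ = 1 → g y = 1 →
      ‖g (S y)‖ ≤ numRadius 𝕜 X T := by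
    intro y g hy hg hgy
    obtain ⟨β, hβ1, hβ2⟩ := exists_align (g (A y)) (φ y)
    set F : StrongDual 𝕜 X := g.comp (P κ) + β • h₀ with hFdef
    have hJyn : ‖J κ y‖ = 1 := by rw [hJ, hy]
    have hFy : F (J κ y) = 1 := by
      rw [hFdef]
      simp only [ContinuousLinearMap.add_apply, ContinuousLinearMap.comp_apply,
        ContinuousLinearMap.smul_apply, smul_eq_mul]
      rw [hPJ, hgy, hh₀J, mul_zero, add_zero]
    have hFn : ‖F‖ = 1 := by
      refine le_antisymm ?_ ?_
      · refine ContinuousLinearMap.opNorm_le_bound _ zero_le_one fun x => ?_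
        rw [hFdef]
        simp only [ContinuousLinearMap.add_apply, ContinuousLinearMap.comp_apply,
          ContinuousLinearMap.smul_apply, smul_eq_mul]
        calc ‖g (P κ x) + β * h₀ x‖ ≤ ‖g (P κ x)‖ + ‖β * h₀ x‖ := norm_add_le _ _
          _ ≤ ‖P κ x‖ + ‖x - J κ (P κ x)‖ := by
              refine add_le_add ?_ ?_
              · calc ‖g (P κ x)‖ ≤ ‖g‖ * ‖P κ x‖ := g.le_opNorm _
                  _ = ‖P κ x‖ := by rw [hg, one_mul]
              · rw [norm_mul, hβ1, one_mul]
                exact hh₀n x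
          _ = ‖x‖ := (hsum κ x).symm
          _ = 1 * ‖x‖ := (one_mul _).symm
      · have := F.unit_le_opNorm (J κ y) hJyn.le
        rw [hFy] at this
        simpa using this
    have hFT : F (T (J κ y)) = g (A y) + β * φ y := by
      rw [hFdef]
      simp only [ContinuousLinearMap.add_apply, ContinuousLinearMap.comp_apply,
        ContinuousLinearMap.smul_apply, smul_eq_mul]
      rfl
    have hpair := pair_le_numRadius (T := T) hJyn hFn hFy
    rw [hFT, hβ2] at hpair
    have hSy : g (S y) = g (A y) + φ y * g w := by
      rw [hSdef]
      simp only [ContinuousLinearMap.add_apply, ContinuousLinearMap.smulRight_apply]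
      rw [map_add, _root_.map_smul, smul_eq_mul]
    have hgw : ‖g w‖ ≤ 1 := by
      have := g.le_opNorm w
      rw [hg, one_mul] at this
      exact this.trans hwn
    calc ‖g (S y)‖ ≤ ‖g (A y)‖ + ‖φ y * g w‖ := hSy ▸ norm_add_le _ _
      _ ≤ ‖g (A y)‖ + ‖φ y‖ * 1 := by
          rw [norm_mul]
          exact add_le_add_right (mul_le_mul_of_nonneg_left hgw (norm_nonneg _)) _
      _ = ‖g (A y)‖ + ‖φ y‖ := by rw [mul_one]
      _ ≤ numRadius 𝕜 X T := hpair
  have hrad : numRadius 𝕜 (E κ) S ≤ numRadius 𝕜 X T := numRadius_le htrans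
  calc (1 - ε) * ⨅ i, numIndex 𝕜 (E i) ≤ (1 - ε) * numIndex 𝕜 (E κ) :=
        mul_le_mul_of_nonneg_left (ciInf_le hbdd κ) (by linarith)
    _ ≤ ‖S‖ * numIndex 𝕜 (E κ) :=
        mul_le_mul_of_nonneg_right hSn.le (numIndex_nonneg 𝕜 (E κ))
    _ = numIndex 𝕜 (E κ) * ‖S‖ := mul_comm _ _
    _ ≤ numRadius 𝕜 (E κ) S := index_mul_norm_le_numRadius S
    _ ≤ numRadius 𝕜 X T := hrad

end HardDirection
section LpFacts

variable {𝕜 : Type*} [RCLike 𝕜] {ι : Type*} [Nonempty ι] {E : ι → Type*}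
  [∀ i, NormedAddCommGroup (E i)] [∀ i, NormedSpace 𝕜 (E i)]

lemma lp_single_add [DecidableEq ι] (p : ℝ≥0∞) (i : ι) (a b : E i) :
    lp.single p i (a + b) = lp.single p i a + lp.single p i b := by
  apply lp.ext
  funext j
  by_cases h : j = i
  · subst h
    rw [lp.coeFn_add, Pi.add_apply, lp.single_apply_self, lp.single_apply_self,
      lp.single_apply_self]
  · rw [lp.coeFn_add, Pi.add_apply, lp.single_apply_ne _ _ _ h, lp.single_apply_ne _ _ _ h,
      lp.single_apply_ne _ _ _ h, add_zero]

lemma norm_lp_single [DecidableEq ι] (p : ℝ≥0∞) [Fact (1 ≤ p)] (i : ι) (a : E i) :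
    ‖(lp.single p i a : lp E p)‖ = ‖a‖ := by
  rcases eq_or_ne p ∞ with rfl | hp
  · rw [lp.norm_eq_ciSup]
    refine le_antisymm (ciSup_le fun j => ?_) ?_
    · by_cases h : j = i
      · subst h; rw [lp.single_apply_self]
      · rw [lp.single_apply_ne _ _ _ h, norm_zero]; exact norm_nonneg a
    · refine le_csSup ⟨‖a‖, ?_⟩ ⟨i, ?_⟩
      · rintro _ ⟨j, rfl⟩
        dsimp only
        by_cases h : j = i
        · subst h; rw [lp.single_apply_self]
        · rw [lp.single_apply_ne _ _ _ h, norm_zero]; exact norm_nonneg a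
      · dsimp only
        rw [lp.single_apply_self]
  · have hp0 : 0 < p.toReal := by
      refine ENNReal.toReal_pos ?_ hp
      intro h0
      have := Fact.out (p := 1 ≤ p)
      rw [h0] at this
      simp at this
    have := lp.norm_single (ENNReal.toReal_pos_iff.1 hp0).1 i a
    simpa using this

/-- the single-coordinate inclusion as a continuous linear map -/
noncomputable def lpJ [DecidableEq ι] (p : ℝ≥0∞) [Fact (1 ≤ p)] (i : ι) :
    E i →L[𝕜] lp E p :=
  LinearMap.mkContinuous
    { toFun := fun a => lp.single p i a
      map_add' := lp_single_add p i
      map_smul' := fun c a => by simpa using (lp.single_smul p i a c) }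
    1 (fun a => by rw [one_mul]; exact (norm_lp_single p i a).le)

@[simp] lemma lpJ_apply [DecidableEq ι] (p : ℝ≥0∞) [Fact (1 ≤ p)] (i : ι) (a : E i) :
    (lpJ (𝕜 := 𝕜) p i a : lp E p) = lp.single p i a := rfl

/-- the coordinate projection as a continuous linear map -/
noncomputable def lpP (p : ℝ≥0∞) [Fact (1 ≤ p)] (i : ι) : lp E p →L[𝕜] E i :=
  LinearMap.mkContinuous
    { toFun := fun f => f i
      map_add' := fun f g => by rw [lp.coeFn_add]; rfl
      map_smul' := fun c f => by rw [lp.coeFn_smul]; rfl }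
    1 (fun f => by
      rw [one_mul]
      refine lp.norm_apply_le_norm ?_ f i
      intro h0
      have := Fact.out (p := 1 ≤ p)
      rw [h0] at this
      simp at this)

@[simp] lemma lpP_apply (p : ℝ≥0∞) [Fact (1 ≤ p)] (i : ι) (f : lp E p) :
    (lpP (𝕜 := 𝕜) p i) f = f i := rfl

lemma sub_single_apply_self [DecidableEq ι] (p : ℝ≥0∞) [Fact (1 ≤ p)] (κ : ι) (x : lp E p) :
    (x - lp.single p κ (x κ)) κ = 0 := by
  rw [lp.coeFn_sub, Pi.sub_apply, lp.single_apply_self, sub_self]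

lemma sub_single_apply_ne [DecidableEq ι] (p : ℝ≥0∞) [Fact (1 ≤ p)] (κ : ι) (x : lp E p)
    {j : ι} (hj : j ≠ κ) : (x - lp.single p κ (x κ)) j = x j := by
  rw [lp.coeFn_sub, Pi.sub_apply, lp.single_apply_ne _ _ _ hj, sub_zero]

lemma lp_inf_norm_max [DecidableEq ι] (κ : ι) (x : lp E ∞) :
    ‖x‖ = max ‖x κ‖ ‖x - lp.single ∞ κ (x κ)‖ := by
  refine le_antisymm ?_ (max_le (lp.norm_apply_le_norm ENNReal.top_ne_zero x κ) ?_)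
  · rw [lp.norm_eq_ciSup]
    refine ciSup_le fun j => ?_
    by_cases h : j = κ
    · subst h; exact le_max_left _ _
    · refine le_trans ?_ (le_max_right _ _)
      have := lp.norm_apply_le_norm ENNReal.top_ne_zero (x - lp.single ∞ κ (x κ)) j
      rwa [sub_single_apply_ne _ _ _ h] at this
  · rw [lp.norm_eq_ciSup (x - lp.single ∞ κ (x κ))]
    refine ciSup_le fun j => ?_
    by_cases h : j = κ
    · subst h
      rw [sub_single_apply_self]
      simp [norm_nonneg]
    · rw [sub_single_apply_ne _ _ _ h]
      exact lp.norm_apply_le_norm ENNReal.top_ne_zero x j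

lemma lp_one_norm_sum [DecidableEq ι] (κ : ι) (x : lp E 1) :
    ‖x‖ = ‖x κ‖ + ‖x - lp.single 1 κ (x κ)‖ := by
  have h1 : 0 < (1 : ℝ≥0∞).toReal := by norm_num
  have hx := lp.hasSum_norm h1 x
  have hg := lp.hasSum_norm h1 (x - lp.single 1 κ (x κ))
  simp only [ENNReal.toReal_one, Real.rpow_one] at hx hg
  have hδ : HasSum (fun j => if j = κ then ‖x κ‖ else 0) ‖x κ‖ := hasSum_ite_eq κ ‖x κ‖
  have hcomb := hδ.add hg
  have hfun : (fun j => (if j = κ then ‖x κ‖ else 0) + ‖(x - lp.single 1 κ (x κ)) j‖)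
      = fun j => ‖x j‖ := by
    funext j
    by_cases h : j = κ
    · subst h
      rw [if_pos rfl, sub_single_apply_self, norm_zero, add_zero]
    · rw [if_neg h, sub_single_apply_ne _ _ _ h, zero_add]
  rw [hfun] at hcomb
  exact hx.unique hcomb

lemma lp_inf_coord (x : lp E ∞) (c : ℝ) (hc : c < ‖x‖) : ∃ i, c < ‖x i‖ := by
  rw [lp.norm_eq_ciSup] at hc
  exact exists_lt_of_lt_ciSup hc

lemma lp_one_opnorm [DecidableEq ι] (T : lp E 1 →L[𝕜] lp E 1) (c : ℝ) (hc : c < ‖T‖) :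
    ∃ i, c < ‖T.comp (lpJ (𝕜 := 𝕜) 1 i)‖ := by
  by_contra hcon
  push_neg at hcon
  have hc0 : 0 ≤ c := le_trans (norm_nonneg _) (hcon (Classical.arbitrary ι))
  refine absurd hc (not_lt.2 ?_)
  refine T.opNorm_le_bound hc0 fun x => ?_
  have hs : HasSum (fun i => lp.single 1 i (x i)) x := lp.hasSum_single (by norm_num) x
  have hTs : HasSum (fun i => T (lp.single 1 i (x i))) (T x) := hs.mapL T
  have hnx : HasSum (fun i => ‖x i‖) ‖x‖ := by
    have := lp.hasSum_norm (by norm_num : 0 < (1 : ℝ≥0∞).toReal) x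
    simpa using this
  have hbound : ∀ i, ‖T (lp.single 1 i (x i))‖ ≤ c * ‖x i‖ := by
    intro i
    have e : T (lp.single 1 i (x i)) = (T.comp (lpJ (𝕜 := 𝕜) 1 i)) (x i) := rfl
    rw [e]
    calc ‖(T.comp (lpJ (𝕜 := 𝕜) 1 i)) (x i)‖ ≤ ‖T.comp (lpJ (𝕜 := 𝕜) 1 i)‖ * ‖x i‖ :=
          ContinuousLinearMap.le_opNorm _ _
      _ ≤ c * ‖x i‖ := mul_le_mul_of_nonneg_right (hcon i) (norm_nonneg _)
  have hsum2 : Summable fun i => c * ‖x i‖ := hnx.summable.mul_left c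
  have hsum1 : Summable fun i => ‖T (lp.single 1 i (x i))‖ :=
    Summable.of_nonneg_of_le (fun i => norm_nonneg _) hbound hsum2
  calc ‖T x‖ = ‖∑' i, T (lp.single 1 i (x i))‖ := by rw [hTs.tsum_eq]
    _ ≤ ∑' i, ‖T (lp.single 1 i (x i))‖ := norm_tsum_le_tsum_norm hsum1
    _ ≤ ∑' i, c * ‖x i‖ := Summable.tsum_le_tsum hbound hsum1 hsum2
    _ = c * ∑' i, ‖x i‖ := tsum_mul_left
    _ = c * ‖x‖ := by rw [hnx.tsum_eq]

lemma lp_nontrivial (p : ℝ≥0∞) [Fact (1 ≤ p)] [∀ i, Nontrivial (E i)] :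
    Nontrivial (lp E p) := by
  classical
  obtain ⟨a, ha⟩ := exists_ne (0 : E (Classical.arbitrary ι))
  refine ⟨lp.single p (Classical.arbitrary ι) a, 0, fun hcon => ha ?_⟩
  have := congrFun (congrArg (fun f : lp E p => (f : ∀ i, E i)) hcon) (Classical.arbitrary ι)
  rwa [lp.single_apply_self, lp.coeFn_zero, Pi.zero_apply] at this

end LpFacts

section C0Facts

variable {𝕜 : Type*} [RCLike 𝕜] {ι : Type*} [Nonempty ι] {E : ι → Type*}
  [∀ i, NormedAddCommGroup (E i)] [∀ i, NormedSpace 𝕜 (E i)]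

lemma single_mem_c0Sum [DecidableEq ι] (κ : ι) (a : E κ) :
    lp.single ∞ κ a ∈ c0Sum 𝕜 E := by
  show Filter.Tendsto (fun j => ‖(lp.single ∞ κ a : lp E ∞) j‖) Filter.cofinite (𝓝 0)
  refine Filter.Tendsto.congr' ?_ tendsto_const_nhds
  refine ((Set.finite_singleton κ).eventually_cofinite_notMem).mono fun j hj => ?_
  have hj' : j ≠ κ := by simpa using hj
  dsimp only
  rw [lp.single_apply_ne _ _ _ hj', norm_zero]

/-- inclusion into the c0 sum -/
noncomputable def c0J [DecidableEq ι] (i : ι) : E i →L[𝕜] ↥(c0Sum 𝕜 E) :=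
  (lpJ (𝕜 := 𝕜) ∞ i).codRestrict (c0Sum 𝕜 E) (fun a => single_mem_c0Sum i a)

/-- projection from the c0 sum -/
noncomputable def c0P (i : ι) : ↥(c0Sum 𝕜 E) →L[𝕜] E i :=
  (lpP (𝕜 := 𝕜) ∞ i).comp (c0Sum 𝕜 E).subtypeL

lemma c0_norm_coe (v : ↥(c0Sum 𝕜 E)) : ‖v‖ = ‖(v : lp E ∞)‖ := rfl

lemma c0J_coe [DecidableEq ι] (i : ι) (a : E i) :
    ((c0J (𝕜 := 𝕜) i a : ↥(c0Sum 𝕜 E)) : lp E ∞) = lp.single ∞ i a := rfl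

lemma c0P_apply (i : ι) (v : ↥(c0Sum 𝕜 E)) : c0P (𝕜 := 𝕜) i v = (v : lp E ∞) i := rfl

lemma c0_hJ [DecidableEq ι] (i : ι) (a : E i) : ‖c0J (𝕜 := 𝕜) i a‖ = ‖a‖ := by
  rw [c0_norm_coe, c0J_coe]
  exact norm_lp_single ∞ i a

lemma c0_hPJ [DecidableEq ι] (i : ι) (a : E i) : c0P (𝕜 := 𝕜) i (c0J (𝕜 := 𝕜) i a) = a := by
  rw [c0P_apply, c0J_coe]
  exact lp.single_apply_self ∞ i a

lemma c0_hmax [DecidableEq ι] (i : ι) (v : ↥(c0Sum 𝕜 E)) :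
    ‖v‖ = max ‖c0P (𝕜 := 𝕜) i v‖ ‖v - c0J (𝕜 := 𝕜) i (c0P (𝕜 := 𝕜) i v)‖ := by
  have ecoe : ((v - c0J (𝕜 := 𝕜) i (c0P (𝕜 := 𝕜) i v) : ↥(c0Sum 𝕜 E)) : lp E ∞)
      = (v : lp E ∞) - lp.single ∞ i ((v : lp E ∞) i) := rfl
  rw [c0_norm_coe, c0_norm_coe, ecoe, c0P_apply]
  exact lp_inf_norm_max i (v : lp E ∞)

lemma c0_nontrivial [∀ i, Nontrivial (E i)] : Nontrivial ↥(c0Sum 𝕜 E) := by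
  classical
  obtain ⟨a, ha⟩ := exists_ne (0 : E (Classical.arbitrary ι))
  refine ⟨c0J (𝕜 := 𝕜) _ a, 0, fun hcon => ha ?_⟩
  have h2 : (lp.single ∞ (Classical.arbitrary ι) a : lp E ∞) = 0 := by
    rw [← c0J_coe (𝕜 := 𝕜)]
    exact congrArg _ hcon
  have := congrFun (congrArg (fun f : lp E ∞ => (f : ∀ i, E i)) h2) (Classical.arbitrary ι)
  rwa [lp.single_apply_self, lp.coeFn_zero, Pi.zero_apply] at this

end C0Facts

/-- The numerical index of the `c₀`-, `ℓ₁`- and `ℓ_∞`-sums of a nonempty family of nonzero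
Banach spaces all coincide with the infimum of the numerical indices of the summands. -/
theorem numIndex_sums (𝕜 : Type*) [RCLike 𝕜] {ι : Type*} [Nonempty ι] (E : ι → Type*)
    [∀ i, NormedAddCommGroup (E i)] [∀ i, NormedSpace 𝕜 (E i)]
    [∀ i, CompleteSpace (E i)] [∀ i, Nontrivial (E i)] :
    numIndex 𝕜 (c0Sum 𝕜 E) = ⨅ i, numIndex 𝕜 (E i) ∧
    numIndex 𝕜 (lp E 1) = ⨅ i, numIndex 𝕜 (E i) ∧
    numIndex 𝕜 (lp E ∞) = ⨅ i, numIndex 𝕜 (E i) := by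
  classical
  have hJ1 : ∀ (i : ι) (y : E i), ‖lpJ (𝕜 := 𝕜) 1 i y‖ = ‖y‖ := fun i y => norm_lp_single 1 i y
  have hPJ1 : ∀ (i : ι) (y : E i), lpP (𝕜 := 𝕜) 1 i (lpJ (𝕜 := 𝕜) 1 i y) = y := fun i y =>
    lp.single_apply_self 1 i y
  have hsum1 : ∀ (i : ι) (x : lp E 1),
      ‖x‖ = ‖lpP (𝕜 := 𝕜) 1 i x‖ + ‖x - lpJ (𝕜 := 𝕜) 1 i (lpP (𝕜 := 𝕜) 1 i x)‖ := fun i x =>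
    lp_one_norm_sum i x
  have hJi : ∀ (i : ι) (y : E i), ‖lpJ (𝕜 := 𝕜) ∞ i y‖ = ‖y‖ := fun i y => norm_lp_single ∞ i y
  have hPJi : ∀ (i : ι) (y : E i), lpP (𝕜 := 𝕜) ∞ i (lpJ (𝕜 := 𝕜) ∞ i y) = y := fun i y =>
    lp.single_apply_self ∞ i y
  have hmaxi : ∀ (i : ι) (x : lp E ∞),
      ‖x‖ = max ‖lpP (𝕜 := 𝕜) ∞ i x‖ ‖x - lpJ (𝕜 := 𝕜) ∞ i (lpP (𝕜 := 𝕜) ∞ i x)‖ := fun i x =>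
    lp_inf_norm_max i x
  have hcoordi : ∀ (x : lp E ∞) (c : ℝ), c < ‖x‖ → ∃ i, c < ‖lpP (𝕜 := 𝕜) ∞ i x‖ := fun x c hc =>
    lp_inf_coord x c hc
  haveI hnt1 : Nontrivial (lp E 1) := lp_nontrivial 1
  haveI hnti : Nontrivial (lp E ∞) := lp_nontrivial ∞
  haveI hntc : Nontrivial ↥(c0Sum 𝕜 E) := c0_nontrivial
  refine ⟨?_, ?_, ?_⟩
  · refine le_antisymm (le_ciInf fun κ => ?_) ?_
    · exact numIndex_le_of_M (c0J (𝕜 := 𝕜) κ) (c0P (𝕜 := 𝕜) κ) (c0_hJ κ) (c0_hPJ κ) (c0_hmax κ)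
    · refine iInf_le_numIndex_of_M (fun i => c0J (𝕜 := 𝕜) i) (fun i => c0P (𝕜 := 𝕜) i)
        c0_hJ c0_hPJ c0_hmax ?_
      intro v c hc
      rw [c0_norm_coe] at hc
      exact lp_inf_coord _ c hc
  · refine le_antisymm (le_ciInf fun κ => ?_) ?_
    · exact numIndex_le_of_L (lpJ (𝕜 := 𝕜) 1 κ) (lpP (𝕜 := 𝕜) 1 κ) (hJ1 κ) (hPJ1 κ) (hsum1 κ)
    · exact iInf_le_numIndex_of_L (fun i => lpJ (𝕜 := 𝕜) 1 i) (fun i => lpP (𝕜 := 𝕜) 1 i)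
        hJ1 hPJ1 hsum1 (fun T c hc => lp_one_opnorm T c hc)
  · refine le_antisymm (le_ciInf fun κ => ?_) ?_
    · exact numIndex_le_of_M (lpJ (𝕜 := 𝕜) ∞ κ) (lpP (𝕜 := 𝕜) ∞ κ) (hJi κ) (hPJi κ) (hmaxi κ)
    · exact iInf_le_numIndex_of_M (fun i => lpJ (𝕜 := 𝕜) ∞ i) (fun i => lpP (𝕜 := 𝕜) ∞ i)
        hJi hPJi hmaxi hcoordi
end

section
/- Let X be a nonzero finite-dimensional real normed space. Then n(X) = 0 if and only if there are infinitely many surjective linear isometries of X onto itself. -/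
open MeasureTheory NormedSpace Metric Filter
open scoped ENNReal NNReal Topology

set_option linter.unusedSectionVars false
set_option maxHeartbeats 1000000
set_option synthInstance.maxHeartbeats 400000

noncomputable section NumIdxSection
namespace NumIdx
variable {X : Type*} [NormedAddCommGroup X] [NormedSpace ℝ X] [FiniteDimensional ℝ X]

lemma exists_norming [Nontrivial X] : ∃ (x : X) (f : StrongDual ℝ X), ‖x‖ = 1 ∧ ‖f‖ = 1 ∧ f x = 1 := by
  obtain ⟨v, hv⟩ := exists_ne (0 : X)
  set x := ‖v‖⁻¹ • v with hxdef
  have hx : ‖x‖ = 1 := by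
    rw [hxdef, norm_smul, norm_inv, norm_norm, inv_mul_cancel₀ (norm_ne_zero_iff.mpr hv)]
  have hx0 : x ≠ 0 := by rw [← norm_ne_zero_iff, hx]; norm_num
  obtain ⟨f, hf1, hf2⟩ := exists_dual_vector ℝ x (norm_ne_zero_iff.mpr hx0)
  exact ⟨x, f, hx, hf1, by rw [hf2, hx]; norm_num⟩

lemma bddAbove_radSet (T : X →L[ℝ] X) :
    BddAbove {r : ℝ | ∃ (x : X) (f : StrongDual ℝ X), ‖x‖ = 1 ∧ ‖f‖ = 1 ∧ f x = 1 ∧ r = ‖f (T x)‖} := by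
  refine ⟨‖T‖, ?_⟩
  rintro r ⟨y, g, hy, hg, hgy, rfl⟩
  calc ‖g (T y)‖ ≤ ‖g‖ * ‖T y‖ := g.le_opNorm _
    _ ≤ ‖T‖ := by rw [hg, one_mul]; simpa [hy] using T.le_opNorm y

lemma abs_le_numRadius {T : X →L[ℝ] X} {x : X} {f : StrongDual ℝ X}
    (hx : ‖x‖ = 1) (hf : ‖f‖ = 1) (hfx : f x = 1) : ‖f (T x)‖ ≤ numRadius ℝ X T :=
  le_csSup (bddAbove_radSet T) ⟨x, f, hx, hf, hfx, rfl⟩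

lemma numRadius_nonneg [Nontrivial X] (T : X →L[ℝ] X) : 0 ≤ numRadius ℝ X T := by
  obtain ⟨x, f, hx, hf, hfx⟩ := exists_norming (X := X)
  exact (norm_nonneg _).trans (abs_le_numRadius hx hf hfx)

lemma numRadius_eq_zero [Nontrivial X] {T : X →L[ℝ] X}
    (h : ∀ (x : X) (f : StrongDual ℝ X), ‖x‖ = 1 → ‖f‖ = 1 → f x = 1 → f (T x) = 0) :
    numRadius ℝ X T = 0 := by
  refine le_antisymm (csSup_le ?_ ?_) (numRadius_nonneg T)
  · obtain ⟨x, f, hx, hf, hfx⟩ := exists_norming (X := X)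
    exact ⟨_, x, f, hx, hf, hfx, rfl⟩
  · rintro r ⟨y, g, hy, hg, hgy, rfl⟩
    rw [h y g hy hg hgy]; simp


lemma exists_inverse {W : X →L[ℝ] X} (hW : ∀ x, ‖W x‖ = ‖x‖) :
    ∃ V : X →L[ℝ] X, W * V = 1 ∧ V * W = 1 ∧ ∀ x, ‖V x‖ = ‖x‖ := by
  have hinj : Function.Injective W := by
    intro a b hab
    have h1 := hW (a - b)
    rw [map_sub, hab, sub_self, norm_zero] at h1
    exact sub_eq_zero.mp (norm_eq_zero.mp h1.symm)
  have hinj' : Function.Injective (W : X →ₗ[ℝ] X) := by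
    simpa using hinj
  have hsurj : Function.Surjective (W : X →ₗ[ℝ] X) :=
    LinearMap.injective_iff_surjective.mp hinj'
  let e : X ≃ₗ[ℝ] X := LinearEquiv.ofBijective (W : X →ₗ[ℝ] X) ⟨hinj', hsurj⟩
  refine ⟨LinearMap.toContinuousLinearMap (e.symm : X →ₗ[ℝ] X), ?_, ?_, ?_⟩
  · ext x
    have : W (e.symm x) = x := e.apply_symm_apply x
    simpa [LinearMap.coe_toContinuousLinearMap'] using this
  · ext x
    have : e.symm (W x) = x := e.symm_apply_apply x
    simpa [LinearMap.coe_toContinuousLinearMap'] using this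
  · intro x
    have h1 : W (e.symm x) = x := e.apply_symm_apply x
    have := hW (e.symm x)
    rw [h1] at this
    simpa [LinearMap.coe_toContinuousLinearMap'] using this.symm


lemma exists_B [Nontrivial X]
    (h : {U : X →ₗ[ℝ] X | Function.Bijective U ∧ ∀ x : X, ‖U x‖ = ‖x‖}.Infinite) :
    ∃ B : X →L[ℝ] X, ‖B‖ = 1 ∧
      ∀ (x : X) (f : StrongDual ℝ X), ‖x‖ = 1 → ‖f‖ = 1 → f x = 1 → f (B x) = 0 := by
  classical
  set S := {U : X →ₗ[ℝ] X | Function.Bijective U ∧ ∀ x : X, ‖U x‖ = ‖x‖} with hS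
  let emb := h.natEmbedding
  let F : ℕ → (X →L[ℝ] X) := fun n => LinearMap.toContinuousLinearMap ((emb n : S) : X →ₗ[ℝ] X)
  have hFnorm : ∀ n x, ‖F n x‖ = ‖x‖ := by
    intro n x
    have := (emb n).2.2 x
    simpa [F, LinearMap.coe_toContinuousLinearMap'] using this
  have hFinj : Function.Injective F := by
    intro a b hab
    have : ((emb a : S) : X →ₗ[ℝ] X) = ((emb b : S) : X →ₗ[ℝ] X) := by
      have := congrArg (fun A : X →L[ℝ] X => (A : X →ₗ[ℝ] X)) hab
      simpa [F, LinearMap.coe_toContinuousLinearMap] using this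
    exact emb.injective (Subtype.ext this)
  have hFball : ∀ n, F n ∈ closedBall (0 : X →L[ℝ] X) 1 := by
    intro n
    rw [mem_closedBall_zero_iff]
    exact ContinuousLinearMap.opNorm_le_bound _ zero_le_one fun x => by
      rw [hFnorm, one_mul]
  obtain ⟨u, -, φ, hφ, hφlim⟩ := (isCompact_closedBall (0 : X →L[ℝ] X) 1).tendsto_subseq hFball
  have hev : ∀ (A : X →L[ℝ] X) (g : ℕ → X →L[ℝ] X) (l : Filter ℕ),
      Tendsto g l (𝓝 A) → ∀ x : X, Tendsto (fun n => g n x) l (𝓝 (A x)) := by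
    intro A g l hg x
    exact ((ContinuousLinearMap.apply ℝ X x).continuous.tendsto A).comp hg
  have hunorm : ∀ x, ‖u x‖ = ‖x‖ := by
    intro x
    have h1 : Tendsto (fun n => ‖F (φ n) x‖) atTop (𝓝 ‖u x‖) := (hev u _ _ hφlim x).norm
    have h2 : Tendsto (fun n => ‖F (φ n) x‖) atTop (𝓝 ‖x‖) := by
      simpa [hFnorm] using (tendsto_const_nhds : Tendsto (fun _ : ℕ => ‖x‖) atTop _)
    exact tendsto_nhds_unique h1 h2
  -- skip finitely many indices where F (φ n) = u
  have hbadsub : {n : ℕ | F (φ n) = u}.Subsingleton := by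
    intro a ha b hb
    exact hφ.injective (hFinj (ha.trans hb.symm))
  obtain ⟨N, hN⟩ := hbadsub.finite.bddAbove
  set W : ℕ → (X →L[ℝ] X) := fun n => F (φ (n + N + 1)) with hWdef
  have hWlim : Tendsto W atTop (𝓝 u) := hφlim.comp (tendsto_add_atTop_nat (N + 1))
  have hWne : ∀ n, W n ≠ u := by
    intro n hn
    have : n + N + 1 ≤ N := hN hn
    omega
  have hWnorm : ∀ n x, ‖W n x‖ = ‖x‖ := fun n x => hFnorm _ x
  obtain ⟨v, huv, hvu, hvnorm⟩ := exists_inverse hunorm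
  set G : ℕ → (X →L[ℝ] X) := fun n => W n * v with hGdef
  have hGlim : Tendsto G atTop (𝓝 1) := by
    have : Tendsto (fun n => W n * v) atTop (𝓝 (u * v)) := hWlim.mul tendsto_const_nhds
    rwa [huv] at this
  have hGne : ∀ n, G n ≠ 1 := by
    intro n hn
    apply hWne n
    have hn' : W n * v = 1 := hn
    calc W n = W n * (v * u) := by rw [hvu, mul_one]
      _ = (W n * v) * u := by rw [mul_assoc]
      _ = u := by rw [hn', one_mul]
  have hGnorm : ∀ n x, ‖G n x‖ = ‖x‖ := by
    intro n x
    have : G n x = W n (v x) := rfl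
    rw [this, hWnorm, hvnorm]
  set ε : ℕ → ℝ := fun n => ‖G n - 1‖ with hεdef
  have hεpos : ∀ n, 0 < ε n := fun n => norm_pos_iff.mpr (sub_ne_zero.mpr (hGne n))
  have hεlim : Tendsto ε atTop (𝓝 0) := by
    have : Tendsto (fun n => ‖G n - 1‖) atTop (𝓝 ‖(1 : X →L[ℝ] X) - 1‖) :=
      (hGlim.sub tendsto_const_nhds).norm
    simpa using this
  set T : ℕ → (X →L[ℝ] X) := fun n => (ε n)⁻¹ • (G n - 1) with hTdef
  have hTnorm : ∀ n, ‖T n‖ = 1 := by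
    intro n
    show ‖(ε n)⁻¹ • (G n - 1)‖ = 1
    have hns := norm_smul ((ε n)⁻¹) (G n - 1)
    rw [hns, Real.norm_eq_abs, abs_inv, abs_of_pos (hεpos n)]
    exact inv_mul_cancel₀ (hεpos n).ne'
  have hTsphere : ∀ n, T n ∈ sphere (0 : X →L[ℝ] X) 1 := fun n =>
    mem_sphere_zero_iff_norm.mpr (hTnorm n)
  obtain ⟨B, hBmem, ψ, hψ, hψlim⟩ := (isCompact_sphere (0 : X →L[ℝ] X) 1).tendsto_subseq hTsphere
  have hBnorm : ‖B‖ = 1 := mem_sphere_zero_iff_norm.mp hBmem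
  refine ⟨B, hBnorm, ?_⟩
  intro x f hx hf hfx
  -- upper bound : f (B x) ≤ 0
  have key_le : ∀ (A : X →L[ℝ] X), (∀ y, ‖A y‖ = ‖y‖) → f (A x) ≤ 1 := by
    intro A hA
    calc f (A x) ≤ ‖f (A x)‖ := le_trans (le_abs_self _) (Real.norm_eq_abs _).ge
      _ ≤ ‖f‖ * ‖A x‖ := f.le_opNorm _
      _ = 1 := by rw [hf, hA, hx, one_mul]
  have hfT_le : ∀ n, f (T n x) ≤ 0 := by
    intro n
    have h1 : f ((G n - 1) x) ≤ 0 := by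
      have : (G n - 1) x = G n x - x := by simp
      rw [this, map_sub, hfx]
      linarith [key_le (G n) (hGnorm n)]
    have : f (T n x) = (ε n)⁻¹ * f ((G n - 1) x) := by
      show f (((ε n)⁻¹ • (G n - 1)) x) = _
      rw [ContinuousLinearMap.smul_apply, _root_.map_smul, smul_eq_mul]
    rw [this]
    exact mul_nonpos_of_nonneg_of_nonpos (inv_nonneg.mpr (hεpos n).le) h1
  have htendB : Tendsto (fun j => f (T (ψ j) x)) atTop (𝓝 (f (B x))) := by
    have h1 : Tendsto (fun j => T (ψ j) x) atTop (𝓝 (B x)) :=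
      ((ContinuousLinearMap.apply ℝ X x).continuous.tendsto B).comp hψlim
    exact (f.continuous.tendsto (B x)).comp h1
  have hle : f (B x) ≤ 0 := le_of_tendsto htendB (Eventually.of_forall fun j => hfT_le _)
  -- lower bound : f (B x) ≥ 0 using inverses of G n
  have hVk : ∀ n, ∃ V : X →L[ℝ] X, G n * V = 1 ∧ V * G n = 1 ∧ ∀ y, ‖V y‖ = ‖y‖ :=
    fun n => exists_inverse (hGnorm n)
  choose V hGV hVG hVnorm using hVk
  have hVbound : ∀ n, ‖V n - 1‖ ≤ ε n := by
    intro n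
    have h1 : V n - 1 = V n * (1 - G n) := by
      rw [mul_sub, mul_one, hVG]
    rw [h1]
    calc ‖V n * (1 - G n)‖ ≤ ‖V n‖ * ‖1 - G n‖ := norm_mul_le _ _
      _ ≤ 1 * ‖1 - G n‖ := by
          gcongr
          exact ContinuousLinearMap.opNorm_le_bound _ zero_le_one fun y => by
            rw [hVnorm, one_mul]
      _ = ε n := by rw [one_mul, norm_sub_rev]
  have hfVT_ge : ∀ n, 0 ≤ f ((V n * T n) x) := by
    intro n
    have h1 : f ((V n - 1) x) ≤ 0 := by
      have h2 : (V n - 1) x = V n x - x := by simp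
      rw [h2, map_sub, hfx]
      linarith [key_le (V n) (hVnorm n)]
    have h3 : -(ε n) • (V n * T n) = V n - 1 := by
      have hεT : (ε n) • T n = G n - 1 := by
        show (ε n) • ((ε n)⁻¹ • (G n - 1)) = G n - 1
        rw [smul_smul, mul_inv_cancel₀ (hεpos n).ne', one_smul]
      have h5 : ε n • (V n * T n) = V n * (G n - 1) := by
        have h6 : V n * T n = (ε n)⁻¹ • (V n * (G n - 1)) := by
          show V n * ((ε n)⁻¹ • (G n - 1)) = (ε n)⁻¹ • (V n * (G n - 1))
          rw [mul_smul_comm]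
        rw [h6, smul_smul, mul_inv_cancel₀ (hεpos n).ne', one_smul]
      rw [neg_smul, h5, mul_sub, mul_one, hVG]
      abel
    rw [← h3] at h1
    have h4 : (((-(ε n)) • (V n * T n)) x) = (-(ε n)) • ((V n * T n) x) := by
      rw [ContinuousLinearMap.smul_apply]
    rw [h4, _root_.map_smul, smul_eq_mul] at h1
    nlinarith [hεpos n]
  have hVTlim : Tendsto (fun j => V (ψ j) * T (ψ j)) atTop (𝓝 B) := by
    rw [tendsto_iff_norm_sub_tendsto_zero]
    have hbound : ∀ j, ‖V (ψ j) * T (ψ j) - B‖ ≤ ‖T (ψ j) - B‖ + ε (ψ j) * ‖B‖ := by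
      intro j
      have : V (ψ j) * T (ψ j) - B = V (ψ j) * (T (ψ j) - B) + (V (ψ j) - 1) * B := by
        simp [mul_sub, sub_mul]
      rw [this]
      calc ‖V (ψ j) * (T (ψ j) - B) + (V (ψ j) - 1) * B‖
          ≤ ‖V (ψ j) * (T (ψ j) - B)‖ + ‖(V (ψ j) - 1) * B‖ := norm_add_le _ _
        _ ≤ ‖V (ψ j)‖ * ‖T (ψ j) - B‖ + ‖V (ψ j) - 1‖ * ‖B‖ := by
            gcongr <;> exact norm_mul_le _ _
        _ ≤ 1 * ‖T (ψ j) - B‖ + ε (ψ j) * ‖B‖ := by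
            gcongr
            · exact ContinuousLinearMap.opNorm_le_bound _ zero_le_one fun y => by
                rw [hVnorm, one_mul]
            · exact hVbound _
        _ = ‖T (ψ j) - B‖ + ε (ψ j) * ‖B‖ := by rw [one_mul]
    have hblim : Tendsto (fun j => ‖T (ψ j) - B‖ + ε (ψ j) * ‖B‖) atTop (𝓝 0) := by
      have h1 : Tendsto (fun j => ‖T (ψ j) - B‖) atTop (𝓝 0) := by
        have := (hψlim.sub (tendsto_const_nhds : Tendsto (fun _ => B) atTop _)).norm
        simpa using this
      have h2 : Tendsto (fun j => ε (ψ j) * ‖B‖) atTop (𝓝 0) := by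
        have := (hεlim.comp (hψ.tendsto_atTop)).mul_const ‖B‖
        simpa using this
      simpa using h1.add h2
    exact squeeze_zero_norm (fun j => by simpa using hbound j) hblim
  have htendB2 : Tendsto (fun j => f ((V (ψ j) * T (ψ j)) x)) atTop (𝓝 (f (B x))) := by
    have h1 : Tendsto (fun j => (V (ψ j) * T (ψ j)) x) atTop (𝓝 (B x)) :=
      ((ContinuousLinearMap.apply ℝ X x).continuous.tendsto B).comp hVTlim
    exact (f.continuous.tendsto (B x)).comp h1
  have hge : 0 ≤ f (B x) := ge_of_tendsto htendB2 (Eventually.of_forall fun j => hfVT_ge _)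
  linarith


lemma frequently_slope_lt
    {T : X →L[ℝ] X}
    (hT : ∀ (x : X) (f : StrongDual ℝ X), ‖x‖ = 1 → ‖f‖ = 1 → f x = 1 → f (T x) = 0)
    {Y : ℝ → X} {t : ℝ} (hy : Y t ≠ 0)
    (hY : HasDerivAt Y (T (Y t)) t) {r : ℝ} (hr : 0 < r) :
    ∃ᶠ z in 𝓝[>] t, slope (fun s => ‖Y s‖) t z < r := by
  classical
  set y := Y t with hydef
  by_contra hcon
  rw [Filter.not_frequently] at hcon
  obtain ⟨z, hz⟩ := exists_seq_tendsto (𝓝[>] t)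
  have hslope_ge : ∀ᶠ n in atTop, r ≤ slope (fun s => ‖Y s‖) t (z n) := by
    filter_upwards [hz.eventually hcon] with n hn using not_lt.mp hn
  have htz : ∀ᶠ n in atTop, t < z n := hz.eventually self_mem_nhdsWithin
  have hzt : Tendsto z atTop (𝓝 t) := hz.mono_right nhdsWithin_le_nhds
  have hYslope : Tendsto (fun n => slope Y t (z n)) atTop (𝓝 (T y)) := by
    have h1 : Tendsto (slope Y t) (𝓝[≠] t) (𝓝 (T y)) := hasDerivAt_iff_tendsto_slope.mp hY
    refine h1.comp (hz.mono_right (nhdsWithin_mono t ?_))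
    intro a ha
    simp only [Set.mem_compl_iff, Set.mem_singleton_iff]
    exact ne_of_gt ha
  set h : ℕ → ℝ := fun n => z n - t with hhdef
  have hhpos : ∀ᶠ n in atTop, 0 < h n := by
    filter_upwards [htz] with n hn
    simpa [hhdef, sub_pos] using hn
  have hh0 : Tendsto h atTop (𝓝 0) := by
    have := hzt.sub (tendsto_const_nhds : Tendsto (fun _ : ℕ => t) atTop _)
    simpa using this
  set w : ℕ → X := fun n => y + h n • T y with hwdef
  have hwlim : Tendsto w atTop (𝓝 y) := by
    have h1 : Tendsto (fun n => h n • T y) atTop (𝓝 ((0:ℝ) • T y)) :=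
      hh0.smul tendsto_const_nhds
    have h2 := (tendsto_const_nhds : Tendsto (fun _ : ℕ => y) atTop _).add h1
    simpa using h2
  have hwne : ∀ᶠ n in atTop, w n ≠ 0 := by
    have hny : Tendsto (fun n => ‖w n‖) atTop (𝓝 ‖y‖) := hwlim.norm
    have h1 : ∀ᶠ n in atTop, 0 < ‖w n‖ := hny.eventually (eventually_gt_nhds (norm_pos_iff.mpr hy))
    filter_upwards [h1] with n hn using norm_pos_iff.mp hn
  have hfex : ∀ n, ∃ g : StrongDual ℝ X, ‖g‖ ≤ 1 ∧ (w n ≠ 0 → (‖g‖ = 1 ∧ g (w n) = ‖w n‖)) := by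
    intro n
    by_cases hn : w n = 0
    · exact ⟨0, by simp, fun hc => absurd hn hc⟩
    · obtain ⟨g, hg1, hg2⟩ := exists_dual_vector ℝ (w n) (norm_ne_zero_iff.mpr hn)
      exact ⟨g, le_of_eq hg1, fun _ => ⟨hg1, by simpa using hg2⟩⟩
  choose g hg1 hg2 using hfex
  have hgball : ∀ n, g n ∈ closedBall (0 : StrongDual ℝ X) 1 := fun n =>
    mem_closedBall_zero_iff.mpr (hg1 n)
  obtain ⟨f, hfball, ψ, hψ, hψlim⟩ :=
    (isCompact_closedBall (0 : StrongDual ℝ X) 1).tendsto_subseq hgball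
  have hfle : ‖f‖ ≤ 1 := mem_closedBall_zero_iff.mp hfball
  have happly : ∀ v : X, Tendsto (fun j => g (ψ j) v) atTop (𝓝 (f v)) := fun v =>
    ((ContinuousLinearMap.apply ℝ ℝ v).continuous.tendsto f).comp hψlim
  have hwneψ : ∀ᶠ j in atTop, w (ψ j) ≠ 0 := hψ.tendsto_atTop.eventually hwne
  have hhposψ : ∀ᶠ j in atTop, 0 < h (ψ j) := hψ.tendsto_atTop.eventually hhpos
  have hslopeψ : ∀ᶠ j in atTop, r ≤ slope (fun s => ‖Y s‖) t (z (ψ j)) :=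
    hψ.tendsto_atTop.eventually hslope_ge
  -- f y = ‖y‖
  have hgy2 : Tendsto (fun j => g (ψ j) y) atTop (𝓝 ‖y‖) := by
    have hb : ∀ᶠ j in atTop, g (ψ j) y = ‖w (ψ j)‖ - h (ψ j) * g (ψ j) (T y) := by
      filter_upwards [hwneψ] with j hj
      have hgw : g (ψ j) (w (ψ j)) = ‖w (ψ j)‖ := (hg2 (ψ j) hj).2
      have hgw2 : g (ψ j) (w (ψ j)) = g (ψ j) y + h (ψ j) * g (ψ j) (T y) := by
        rw [hwdef]
        simp only [map_add, _root_.map_smul, smul_eq_mul]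
      linarith
    have h1 : Tendsto (fun j => ‖w (ψ j)‖) atTop (𝓝 ‖y‖) := hwlim.norm.comp hψ.tendsto_atTop
    have h2 : Tendsto (fun j => h (ψ j) * g (ψ j) (T y)) atTop (𝓝 (0 * f (T y))) :=
      (hh0.comp hψ.tendsto_atTop).mul (happly (T y))
    rw [zero_mul] at h2
    have h3 := h1.sub h2
    rw [sub_zero] at h3
    exact Tendsto.congr' (hb.mono fun j hj => hj.symm) h3
  have hfy : f y = ‖y‖ := tendsto_nhds_unique (happly y) hgy2
  have hyn : ‖y‖ ≠ 0 := norm_ne_zero_iff.mpr hy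
  have hypos : 0 < ‖y‖ := norm_pos_iff.mpr hy
  -- f (T y) = 0
  have hfTy : f (T y) = 0 := by
    have hf1 : ‖f‖ = 1 := by
      refine le_antisymm hfle ?_
      have h2 : ‖y‖ ≤ ‖f‖ * ‖y‖ := by
        calc ‖y‖ = f y := hfy.symm
          _ ≤ ‖f y‖ := le_trans (le_abs_self _) (Real.norm_eq_abs _).ge
          _ ≤ ‖f‖ * ‖y‖ := f.le_opNorm y
      nlinarith
    have hx1 : ‖(‖y‖⁻¹ • y : X)‖ = 1 := by
      rw [norm_smul, norm_inv, norm_norm, inv_mul_cancel₀ hyn]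
    have hfx1 : f (‖y‖⁻¹ • y) = 1 := by
      rw [_root_.map_smul, smul_eq_mul, hfy, inv_mul_cancel₀ hyn]
    have hkey := hT _ f hx1 hf1 hfx1
    have h5 : T (‖y‖⁻¹ • y) = ‖y‖⁻¹ • T y := _root_.map_smul T _ _
    rw [h5, _root_.map_smul, smul_eq_mul] at hkey
    exact (mul_eq_zero.mp hkey).resolve_left (inv_ne_zero hyn)
  -- slope estimate
  have hgyle : ∀ j, g (ψ j) y ≤ ‖y‖ := by
    intro j
    calc g (ψ j) y ≤ ‖g (ψ j) y‖ := le_trans (le_abs_self _) (Real.norm_eq_abs _).ge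
      _ ≤ ‖g (ψ j)‖ * ‖y‖ := (g (ψ j)).le_opNorm y
      _ ≤ 1 * ‖y‖ := by gcongr; exact hg1 _
      _ = ‖y‖ := one_mul _
  have hest : ∀ᶠ j in atTop,
      r ≤ g (ψ j) (T y) + ‖slope Y t (z (ψ j)) - T y‖ := by
    filter_upwards [hwneψ, hhposψ, hslopeψ] with j hj hp hs
    set hh := h (ψ j) with hhh
    have hgw : g (ψ j) (w (ψ j)) = ‖w (ψ j)‖ := (hg2 (ψ j) hj).2
    have hgw2 : g (ψ j) (w (ψ j)) = g (ψ j) y + hh * g (ψ j) (T y) := by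
      rw [hwdef]
      simp only [map_add, _root_.map_smul, smul_eq_mul]
      rfl
    have hdiff : ‖w (ψ j)‖ - ‖y‖ ≤ hh * g (ψ j) (T y) := by
      have := hgyle j
      linarith
    -- Y (z ψj) - w ψj = hh • (slope Y t (z ψj) - T y)
    have e2 : hh • slope Y t (z (ψ j)) = Y (z (ψ j)) - y := by
      rw [slope_def_module]
      rw [smul_smul]
      have : hh * (z (ψ j) - t)⁻¹ = 1 := by
        rw [hhh]
        have hzp : (0:ℝ) < z (ψ j) - t := hp
        exact mul_inv_cancel₀ hzp.ne'
      rw [this, one_smul, hydef]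
    have e1 : Y (z (ψ j)) - w (ψ j) = hh • (slope Y t (z (ψ j)) - T y) := by
      rw [smul_sub, e2, hwdef]
      show Y (z (ψ j)) - (y + hh • T y) = _
      abel
    have hYz : ‖Y (z (ψ j))‖ ≤ ‖w (ψ j)‖ + hh * ‖slope Y t (z (ψ j)) - T y‖ := by
      have hws : w (ψ j) + (Y (z (ψ j)) - w (ψ j)) = Y (z (ψ j)) := by abel
      calc ‖Y (z (ψ j))‖ = ‖w (ψ j) + (Y (z (ψ j)) - w (ψ j))‖ := by rw [hws]
        _ ≤ ‖w (ψ j)‖ + ‖Y (z (ψ j)) - w (ψ j)‖ := norm_add_le _ _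
        _ = ‖w (ψ j)‖ + hh * ‖slope Y t (z (ψ j)) - T y‖ := by
            rw [e1, norm_smul, Real.norm_eq_abs, abs_of_pos hp]
    have hs' : r * hh ≤ ‖Y (z (ψ j))‖ - ‖y‖ := by
      have hsl : slope (fun s => ‖Y s‖) t (z (ψ j)) = (‖Y (z (ψ j))‖ - ‖y‖) / hh := by
        rw [slope_def_field, hydef, hhh]
      rw [hsl] at hs
      have := (le_div_iff₀ hp).mp hs
      linarith
    have hcomb : r * hh ≤ hh * g (ψ j) (T y) + hh * ‖slope Y t (z (ψ j)) - T y‖ := by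
      linarith
    nlinarith
  have hclim : Tendsto (fun j => g (ψ j) (T y) + ‖slope Y t (z (ψ j)) - T y‖) atTop
      (𝓝 (f (T y) + 0)) := by
    refine (happly (T y)).add ?_
    have h1 : Tendsto (fun j => slope Y t (z (ψ j)) - T y) atTop (𝓝 (T y - T y)) :=
      (hYslope.comp hψ.tendsto_atTop).sub tendsto_const_nhds
    rw [sub_self] at h1
    simpa using h1.norm
  rw [hfTy, add_zero] at hclim
  have : r ≤ 0 := ge_of_tendsto hclim hest
  linarith


lemma exp_neg_mul' (A : X →L[ℝ] X) : exp (-A) * exp A = 1 := by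
  rw [← exp_add_of_commute_of_mem_ball (𝕂 := ℝ) (Commute.neg_left (Commute.refl A)) ((expSeries_radius_eq_top ℝ (X →L[ℝ] X)).symm ▸ edist_lt_top _ _) ((expSeries_radius_eq_top ℝ (X →L[ℝ] X)).symm ▸ edist_lt_top _ _), neg_add_cancel, exp_zero]

lemma exp_apply_ne_zero' (A : X →L[ℝ] X) {x : X} (hx : x ≠ 0) : exp A x ≠ 0 := by
  intro h
  apply hx
  have h1 : (exp (-A) * exp A) x = x := by rw [exp_neg_mul']; rfl
  have h2 : (exp (-A) * exp A) x = exp (-A) (exp A x) := rfl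
  rw [h2, h, map_zero] at h1
  exact h1.symm

lemma hasDerivAt_exp_apply' (T : X →L[ℝ] X) (x : X) (s : ℝ) :
    HasDerivAt (fun u : ℝ => exp (u • T) x) (T (exp (s • T) x)) s := by
  have h1 : HasDerivAt (fun u : ℝ => exp (u • T)) (exp (s • T) * T) s :=
    hasDerivAt_exp_smul_const T s
  have h2 := h1.clm_apply (hasDerivAt_const s x)
  simp only [map_zero, add_zero] at h2
  have h3 : (exp (s • T) * T) x = T (exp (s • T) x) := by
    have hc : Commute (exp (s • T)) T := ((Commute.refl T).smul_left s).exp_left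
    calc (exp (s • T) * T) x = (T * exp (s • T)) x := by rw [hc.eq]
      _ = T (exp (s • T) x) := rfl
  rwa [h3] at h2

lemma norm_exp_apply_le {T : X →L[ℝ] X}
    (hT : ∀ (x : X) (f : StrongDual ℝ X), ‖x‖ = 1 → ‖f‖ = 1 → f x = 1 → f (T x) = 0)
    (x : X) {t : ℝ} (ht : 0 ≤ t) : ‖exp (t • T) x‖ ≤ ‖x‖ := by
  rcases eq_or_ne x 0 with rfl | hx
  · simp
  set Y : ℝ → X := fun u => exp (u • T) x with hYdef
  have hYd : ∀ s, HasDerivAt Y (T (Y s)) s := fun s => hasDerivAt_exp_apply' T x s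
  have hYne : ∀ s, Y s ≠ 0 := fun s => exp_apply_ne_zero' _ hx
  have hYcont : Continuous Y := continuous_iff_continuousAt.mpr fun s => (hYd s).continuousAt
  have hY0 : Y 0 = x := by
    rw [hYdef]
    simp [exp_zero]
  have key : ∀ ε > (0:ℝ), ‖Y t‖ ≤ ‖x‖ + ε * t := by
    intro ε hε
    have := image_le_of_liminf_slope_right_le_deriv_boundary
      (f := fun s => ‖Y s‖) (a := 0) (b := t)
      (hYcont.norm.continuousOn)
      (B := fun s => ‖x‖ + ε * s) (B' := fun _ => ε)
      (by show ‖Y 0‖ ≤ ‖x‖ + ε * 0; rw [hY0]; simp)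
      (by fun_prop)
      (fun s hs => by
        have h1 : HasDerivAt (fun u : ℝ => ‖x‖ + ε * u) ε s := by
          simpa using ((hasDerivAt_id s).const_mul ε).const_add ‖x‖
        exact h1.hasDerivWithinAt)
      (fun s hs r hr => frequently_slope_lt hT (hYne s) (hYd s) (lt_trans hε hr))
    exact this (Set.right_mem_Icc.mpr ht)
  show ‖Y t‖ ≤ ‖x‖
  by_contra hcon
  push_neg at hcon
  rcases eq_or_lt_of_le ht with rfl | htpos
  · rw [hY0] at hcon
    exact absurd hcon (lt_irrefl _)
  · have h1 := key ((‖Y t‖ - ‖x‖) / (2 * t)) (div_pos (by linarith) (by linarith))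
    have h2 : ((‖Y t‖ - ‖x‖) / (2 * t)) * t = (‖Y t‖ - ‖x‖) / 2 := by
      field_simp
    rw [h2] at h1
    linarith

lemma norm_exp_apply_eq {T : X →L[ℝ] X}
    (hT : ∀ (x : X) (f : StrongDual ℝ X), ‖x‖ = 1 → ‖f‖ = 1 → f x = 1 → f (T x) = 0)
    (x : X) {t : ℝ} (ht : 0 ≤ t) : ‖exp (t • T) x‖ = ‖x‖ := by
  have hT' : ∀ (x : X) (f : StrongDual ℝ X), ‖x‖ = 1 → ‖f‖ = 1 → f x = 1 → f ((-T) x) = 0 := by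
    intro y f hy hf hfy
    have := hT y f hy hf hfy
    simp only [ContinuousLinearMap.neg_apply, map_neg, this, neg_zero]
  refine le_antisymm (norm_exp_apply_le hT x ht) ?_
  have h1 : ‖exp (t • (-T)) (exp (t • T) x)‖ ≤ ‖exp (t • T) x‖ :=
    norm_exp_apply_le hT' _ ht
  have h2 : exp (t • (-T)) (exp (t • T) x) = x := by
    have h3 : t • (-T) = -(t • T) := by rw [smul_neg]
    rw [h3]
    have h4 : (exp (-(t • T)) * exp (t • T)) x = x := by rw [exp_neg_mul']; rfl
    exact h4
  rwa [h2] at h1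


lemma forward [Nontrivial X] (h0 : numIndex ℝ X = 0) :
    {U : X →ₗ[ℝ] X | Function.Bijective U ∧ ∀ x : X, ‖U x‖ = ‖x‖}.Infinite := by
  classical
  have hSne : {r : ℝ | ∃ T : X →L[ℝ] X, ‖T‖ = 1 ∧ r = numRadius ℝ X T}.Nonempty := by
    refine ⟨numRadius ℝ X 1, 1, ?_, rfl⟩
    rw [ContinuousLinearMap.one_def]
    exact ContinuousLinearMap.norm_id
  have hex : ∀ k : ℕ, ∃ T : X →L[ℝ] X, ‖T‖ = 1 ∧ numRadius ℝ X T < 1/((k:ℝ)+1) := by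
    intro k
    have hlt : sInf {r : ℝ | ∃ T : X →L[ℝ] X, ‖T‖ = 1 ∧ r = numRadius ℝ X T} < 1/((k:ℝ)+1) := by
      have : sInf {r : ℝ | ∃ T : X →L[ℝ] X, ‖T‖ = 1 ∧ r = numRadius ℝ X T} = numIndex ℝ X := rfl
      rw [this, h0]
      positivity
    obtain ⟨r, ⟨T, hT1, rfl⟩, hr⟩ := exists_lt_of_csInf_lt hSne hlt
    exact ⟨T, hT1, hr⟩
  choose Ts hTs1 hTs2 using hex
  have hTsph : ∀ k, Ts k ∈ sphere (0 : X →L[ℝ] X) 1 := fun k =>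
    mem_sphere_zero_iff_norm.mpr (hTs1 k)
  obtain ⟨T, hTmem, φ, hφ, hφlim⟩ :=
    (isCompact_sphere (0 : X →L[ℝ] X) 1).tendsto_subseq hTsph
  have hTnorm : ‖T‖ = 1 := mem_sphere_zero_iff_norm.mp hTmem
  have hT : ∀ (x : X) (f : StrongDual ℝ X), ‖x‖ = 1 → ‖f‖ = 1 → f x = 1 → f (T x) = 0 := by
    intro x f hx hf hfx
    have h1 : Tendsto (fun j => f (Ts (φ j) x)) atTop (𝓝 (f (T x))) :=
      (f.continuous.tendsto _).comp
        (((ContinuousLinearMap.apply ℝ X x).continuous.tendsto T).comp hφlim)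
    have h3 : Tendsto (fun j => ‖f (Ts (φ j) x)‖) atTop (𝓝 ‖f (T x)‖) := h1.norm
    have h4 : ∀ j, ‖f (Ts (φ j) x)‖ ≤ 1/((φ j : ℝ)+1) := fun j =>
      (abs_le_numRadius hx hf hfx).trans (hTs2 _).le
    have h5 : Tendsto (fun j : ℕ => 1/((φ j : ℝ) + 1)) atTop (𝓝 0) := by
      have hb : Tendsto (fun n : ℕ => 1/((n : ℝ) + 1)) atTop (𝓝 0) :=
        tendsto_one_div_add_atTop_nhds_zero_nat
      exact hb.comp hφ.tendsto_atTop
    have h6 : ‖f (T x)‖ ≤ 0 := le_of_tendsto_of_tendsto' h3 h5 h4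
    have h7 : ‖f (T x)‖ = 0 := le_antisymm h6 (norm_nonneg _)
    exact norm_eq_zero.mp h7
  -- build the one-parameter group of isometries
  set e : ℝ → (X →L[ℝ] X) := fun s => exp (s • T) with hedef
  have hecont : Continuous e :=
    continuous_iff_continuousAt.mpr fun s => (hasDerivAt_exp_smul_const T s).continuousAt
  have hiso : ∀ s, 0 ≤ s → ∀ x : X, ‖e s x‖ = ‖x‖ := fun s hs x => norm_exp_apply_eq hT x hs
  have he0 : e 0 = 1 := by
    show exp ((0:ℝ) • T) = 1
    rw [zero_smul, exp_zero]
  have ht0 : ∃ t₀, 0 < t₀ ∧ e t₀ ≠ 1 := by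
    by_contra hc
    push_neg at hc
    have hev : e =ᶠ[𝓝 (1:ℝ)] fun _ => 1 := by
      have hmem : Set.Ioi (0:ℝ) ∈ 𝓝 (1:ℝ) := isOpen_Ioi.mem_nhds (Set.mem_Ioi.mpr one_pos)
      filter_upwards [hmem] with s hs
      exact hc s hs
    have hd1 : HasDerivAt e (e 1 * T) 1 := hasDerivAt_exp_smul_const T 1
    have hd2 : HasDerivAt e 0 1 :=
      (hasDerivAt_const (1:ℝ) (1 : X →L[ℝ] X)).congr_of_eventuallyEq hev
    have heq := hd1.unique hd2
    have he1 : e 1 = 1 := hc 1 one_pos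
    rw [he1, one_mul] at heq
    rw [heq] at hTnorm
    simp at hTnorm
  obtain ⟨t₀, ht₀pos, ht₀ne⟩ := ht0
  intro hfin
  set ψ : ℝ → ℝ := fun s => ‖e s - 1‖ with hψdef
  have hψcont : ContinuousOn ψ (Set.Icc 0 t₀) :=
    ((hecont.sub continuous_const).norm).continuousOn
  have hψ0 : ψ 0 = 0 := by
    show ‖e 0 - 1‖ = 0
    rw [he0, sub_self, norm_zero]
  have hcpos : 0 < ψ t₀ := norm_pos_iff.mpr (sub_ne_zero.mpr ht₀ne)
  have hIVT := intermediate_value_Icc ht₀pos.le hψcont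
  rw [hψ0] at hIVT
  have hmem : ∀ s ∈ Set.Icc (0:ℝ) t₀,
      ((e s : X →ₗ[ℝ] X)) ∈ {U : X →ₗ[ℝ] X | Function.Bijective U ∧ ∀ x : X, ‖U x‖ = ‖x‖} := by
    intro s hs
    have hn : ∀ x : X, ‖e s x‖ = ‖x‖ := hiso s hs.1
    have hinj : Function.Injective (e s) := by
      intro a b hab
      have h1 := hn (a - b)
      rw [map_sub, hab, sub_self, norm_zero] at h1
      exact sub_eq_zero.mp (norm_eq_zero.mp h1.symm)
    have hinj' : Function.Injective ((e s : X →ₗ[ℝ] X)) := by simpa using hinj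
    exact ⟨⟨hinj', LinearMap.injective_iff_surjective.mp hinj'⟩, fun x => hn x⟩
  have hrt : ∀ s : ℝ, LinearMap.toContinuousLinearMap ((e s : X →ₗ[ℝ] X)) = e s := by
    intro s
    ext x
    rw [LinearMap.coe_toContinuousLinearMap']
    rfl
  have hsub : ψ '' Set.Icc 0 t₀ ⊆
      (fun U : X →ₗ[ℝ] X => ‖LinearMap.toContinuousLinearMap U - 1‖) ''
        {U : X →ₗ[ℝ] X | Function.Bijective U ∧ ∀ x : X, ‖U x‖ = ‖x‖} := by
    rintro _ ⟨s, hs, rfl⟩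
    refine ⟨(e s : X →ₗ[ℝ] X), hmem s hs, ?_⟩
    show ‖LinearMap.toContinuousLinearMap ((e s : X →ₗ[ℝ] X)) - 1‖ = ψ s
    rw [hrt s]
  have hfin2 := (hfin.image (fun U : X →ₗ[ℝ] X => ‖LinearMap.toContinuousLinearMap U - 1‖))
  have hfin3 : (Set.Icc (0:ℝ) (ψ t₀)).Finite := hfin2.subset (hIVT.trans hsub)
  exact (Set.Icc_infinite hcpos) hfin3


end NumIdx
end NumIdxSection

/-- A nonzero finite-dimensional real normed space has numerical index `0` if and only
if it admits infinitely many surjective linear isometries onto itself. -/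
theorem numIndex_eq_zero_iff_infinite_isometries (X : Type*) [NormedAddCommGroup X]
    [NormedSpace ℝ X] [FiniteDimensional ℝ X] [Nontrivial X] :
    numIndex ℝ X = 0 ↔
      {U : X →ₗ[ℝ] X | Function.Bijective U ∧ ∀ x : X, ‖U x‖ = ‖x‖}.Infinite := by
  constructor
  · exact NumIdx.forward
  · intro h
    obtain ⟨B, hB1, hB2⟩ := NumIdx.exists_B h
    have h0 : numRadius ℝ X B = 0 := NumIdx.numRadius_eq_zero hB2
    have hbdd : BddBelow {r : ℝ | ∃ T : X →L[ℝ] X, ‖T‖ = 1 ∧ r = numRadius ℝ X T} := by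
      refine ⟨0, ?_⟩
      rintro r ⟨T', hT', rfl⟩
      exact NumIdx.numRadius_nonneg T'
    refine le_antisymm (csInf_le hbdd ⟨B, hB1, h0.symm⟩) ?_
    refine le_csInf ⟨0, B, hB1, h0.symm⟩ ?_
    rintro r ⟨T', hT', rfl⟩
    exact NumIdx.numRadius_nonneg T'
end
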